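/- arXiv:2004.07997 — 4 statements merged into one kernel-verified Lean document; each statement's English description precedes it below -/
import Mathlib

section
/- If P(τ₁ = 1) > 0, then P(τ₁ < ∞) = 1. -/
open MeasureTheory ProbabilityTheory Filter ENNReal
open scoped Topology

/-- `τ₁ := inf {n ≥ 1 : K_{n+i} ≤ i for all i ≥ 0}`, with `inf ∅ = ∞`. -/
noncomputable def tau1 {Ω : Type*} (K : ℕ → Ω → ℕ) (ω : Ω) : ℕ∞ :=
  sInf {m : ℕ∞ | ∃ n : ℕ, m = (n : ℕ∞) ∧ 1 ≤ n ∧ ∀ i : ℕ, K (n + i) ω ≤ i}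

lemma tau1_one_imp {Ω : Type*} {K : ℕ → Ω → ℕ} {ω : Ω} (h : tau1 K ω = 1) :
    ∀ i : ℕ, K (1 + i) ω ≤ i := by
  classical
  set S := {m : ℕ∞ | ∃ n : ℕ, m = (n : ℕ∞) ∧ 1 ≤ n ∧ ∀ i : ℕ, K (n + i) ω ≤ i} with hS
  have htau : tau1 K ω = sInf S := rfl
  have hne : S.Nonempty := by
    by_contra hemp
    rw [Set.not_nonempty_iff_eq_empty] at hemp
    rw [htau, hemp, sInf_empty] at h
    simp at h
  set T := {n : ℕ | 1 ≤ n ∧ ∀ i : ℕ, K (n + i) ω ≤ i} with hT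
  have hTne : T.Nonempty := by
    obtain ⟨m, n, rfl, h1, h2⟩ := hne
    exact ⟨n, h1, h2⟩
  have hmem := Nat.sInf_mem hTne
  have hlow : ((sInf T : ℕ) : ℕ∞) ≤ sInf S := by
    apply le_sInf
    rintro m ⟨n, rfl, h1, h2⟩
    have hn : n ∈ T := ⟨h1, h2⟩
    exact_mod_cast Nat.sInf_le hn
  have hup : sInf S ≤ ((sInf T : ℕ) : ℕ∞) := sInf_le ⟨sInf T, rfl, hmem.1, hmem.2⟩
  have heq : sInf S = ((sInf T : ℕ) : ℕ∞) := le_antisymm hup hlow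
  rw [htau, heq] at h
  have h1 : (sInf T : ℕ) = 1 := by exact_mod_cast h
  have := hmem.2
  rw [h1] at this
  exact this

/-- If `P(τ₁ = 1) > 0`, then `P(τ₁ < ∞) = 1`. -/
theorem tau1_finite_of_pos {Ω : Type*} [MeasurableSpace Ω] (P : Measure Ω)
    [IsProbabilityMeasure P] (K : ℕ → Ω → ℕ) (hmeas : ∀ n, Measurable (K n))
    (hindep : iIndepFun K P)
    (hident : ∀ n, P.map (K n) = P.map (K 0))
    (hpos : 0 < P {ω | tau1 K ω = 1}) :
    P {ω | tau1 K ω < ⊤} = 1 := by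
  classical
  set s : ℕ → MeasurableSpace Ω := fun n => MeasurableSpace.comap (K n) inferInstance with hs
  set A : ℕ → Set Ω := fun n => ⋂ i : ℕ, (K (n + i)) ⁻¹' Set.Iic i with hA
  have hAmeas : ∀ n, MeasurableSet (A n) := fun n =>
    MeasurableSet.iInter fun i => (hmeas (n + i)) measurableSet_Iic
  -- finite approximations have `n`-independent measure
  have hBprod : ∀ n m : ℕ,
      P (⋂ i ∈ Finset.range m, (K (n + i)) ⁻¹' Set.Iic i)
        = ∏ i ∈ Finset.range m, P ((K 0) ⁻¹' Set.Iic i) := by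
    intro n m
    have h1 : (⋂ i ∈ Finset.range m, (K (n + i)) ⁻¹' Set.Iic i)
        = ⋂ j ∈ Finset.Ico n (n + m), (K j) ⁻¹' Set.Iic (j - n) := by
      ext ω
      simp only [Set.mem_iInter, Finset.mem_range, Finset.mem_Ico, Set.mem_preimage, Set.mem_Iic]
      constructor
      · rintro h j ⟨hj1, hj2⟩
        have := h (j - n) (by omega)
        rwa [Nat.add_sub_cancel' hj1] at this
      · intro h i hi
        have := h (n + i) ⟨Nat.le_add_right _ _, by omega⟩
        simpa using this
    have h2 := hindep.meas_biInter (S := Finset.Ico n (n + m))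
      (s := fun j => (K j) ⁻¹' Set.Iic (j - n))
      (fun j _ => ⟨Set.Iic (j - n), measurableSet_Iic, rfl⟩)
    rw [h1, h2, Finset.prod_Ico_eq_prod_range]
    have hnm : n + m - n = m := by omega
    rw [hnm]
    simp only [Nat.add_sub_cancel_left]
    apply Finset.prod_congr rfl
    intro i _
    rw [← Measure.map_apply (hmeas (n + i)) measurableSet_Iic, hident (n + i),
      Measure.map_apply (hmeas 0) measurableSet_Iic]
  -- measure of A n is independent of n
  have hAeq : ∀ n : ℕ, P (A n) = ⨅ m : ℕ, ∏ i ∈ Finset.range m, P ((K 0) ⁻¹' Set.Iic i) := by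
    intro n
    have hdir : Directed (· ⊇ ·) (fun m => ⋂ i ∈ Finset.range m, (K (n + i)) ⁻¹' Set.Iic i) := by
      intro a b
      refine ⟨max a b, ?_, ?_⟩ <;>
      · intro ω hω
        simp only [Set.mem_iInter, Finset.mem_range] at hω ⊢
        intro i hi
        exact hω i (by omega)
    have hmeasB : ∀ m, NullMeasurableSet (⋂ i ∈ Finset.range m, (K (n+i))⁻¹' Set.Iic i) P :=
      fun m => (MeasurableSet.biInter (Finset.range m).countable_toSet
        (fun i _ => (hmeas (n+i)) measurableSet_Iic)).nullMeasurableSet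
    have hAiInter : A n = ⋂ m : ℕ, ⋂ i ∈ Finset.range m, (K (n + i)) ⁻¹' Set.Iic i := by
      ext ω
      simp only [hA, Set.mem_iInter, Finset.mem_range, Set.mem_preimage, Set.mem_Iic]
      exact ⟨fun h m i _ => h i, fun h i => h (i + 1) i (Nat.lt_succ_self i)⟩
    rw [hAiInter, Directed.measure_iInter hmeasB hdir ⟨0, measure_ne_top P _⟩]
    simp_rw [hBprod]
  -- positivity of P (A 1)
  have hApos : 0 < P (A 1) := by
    refine lt_of_lt_of_le hpos (measure_mono ?_)
    intro ω hω
    simp only [Set.mem_setOf_eq] at hω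
    simp only [hA, Set.mem_iInter, Set.mem_preimage, Set.mem_Iic]
    exact tau1_one_imp hω
  -- tail event
  set U : ℕ → Set Ω := fun N => ⋃ n : ℕ, ⋃ (_ : N ≤ n), A n with hU
  set T : Set Ω := ⋂ N : ℕ, U N with hT
  have hUanti : ∀ {N M : ℕ}, N ≤ M → U M ⊆ U N := by
    intro N M hNM ω hω
    simp only [hU, Set.mem_iUnion] at hω ⊢
    obtain ⟨n, hn, h⟩ := hω
    exact ⟨n, le_trans hNM hn, h⟩
  have hUmeas : ∀ N, MeasurableSet (U N) :=
    fun N => MeasurableSet.iUnion fun n => MeasurableSet.iUnion fun _ => hAmeas n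
  have hUge : ∀ N, P (A 1) ≤ P (U N) := by
    intro N
    calc P (A 1) = P (A (max N 1)) := by rw [hAeq, hAeq]
    _ ≤ P (U N) := measure_mono (by
        intro ω h
        simp only [hU, Set.mem_iUnion]
        exact ⟨max N 1, le_max_left _ _, h⟩)
  have hPTpos : 0 < P T := by
    have hdir : Directed (· ⊇ ·) U := fun a b =>
      ⟨max a b, hUanti (le_max_left _ _), hUanti (le_max_right _ _)⟩
    have : P T = ⨅ N, P (U N) :=
      Directed.measure_iInter (fun N => (hUmeas N).nullMeasurableSet) hdir
        ⟨0, measure_ne_top P _⟩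
    rw [this]
    exact lt_of_lt_of_le hApos (le_iInf hUge)
  -- T is a tail event
  have h_le : ∀ n, s n ≤ ‹MeasurableSpace Ω› := fun n => (hmeas n).comap_le
  have hind' : iIndep s P := by
    rw [iIndepFun_iff_iIndep] at hindep
    exact hindep
  have htail : MeasurableSet[limsup s atTop] T := by
    rw [limsup_eq_iInf_iSup_of_nat, MeasurableSpace.measurableSet_iInf]
    intro N
    have hTeq : T = ⋂ M : ℕ, U (N + M) := by
      apply Set.Subset.antisymm
      · exact fun ω hω => Set.mem_iInter.2 fun M => Set.mem_iInter.1 hω (N + M)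
      · intro ω hω
        refine Set.mem_iInter.2 fun M => ?_
        exact hUanti (Nat.le_add_left M N) (Set.mem_iInter.1 hω M)
    rw [hTeq]
    refine MeasurableSet.iInter fun M => ?_
    refine MeasurableSet.iUnion fun n => ?_
    refine MeasurableSet.iUnion fun hn => ?_
    refine MeasurableSet.iInter fun i => ?_
    have hle : s (n + i) ≤ ⨆ j, ⨆ (_ : N ≤ j), s j :=
      le_iSup₂ (f := fun (j : ℕ) (_ : N ≤ j) => s j) (n + i) (by omega)
    exact hle _ ⟨Set.Iic i, measurableSet_Iic, rfl⟩
  have h01 := measure_zero_or_one_of_measurableSet_limsup_atTop h_le hind' htail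
  have hPT : P T = 1 := h01.resolve_left (by exact ne_of_gt hPTpos)
  -- conclusion
  have hsub : T ⊆ {ω | tau1 K ω < ⊤} := by
    intro ω hω
    have h1 : ω ∈ U 1 := Set.mem_iInter.1 hω 1
    simp only [hU, Set.mem_iUnion] at h1
    obtain ⟨n, hn, hAn⟩ := h1
    have hAn' : ∀ i : ℕ, K (n + i) ω ≤ i := by
      intro i
      have := Set.mem_iInter.1 hAn i
      simpa using this
    have hle : tau1 K ω ≤ (n : ℕ∞) := sInf_le ⟨n, rfl, hn, hAn'⟩
    exact lt_of_le_of_lt hle (WithTop.coe_lt_top n)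
  refine le_antisymm (prob_le_one) ?_
  calc (1 : ℝ≥0∞) = P T := hPT.symm
  _ ≤ P {ω | tau1 K ω < ⊤} := measure_mono hsub
end

section
/- Suppose P(τ₁ = 1) > 0. Define T₁ := 1, S_k := inf{i ≥ 0 : K_{T_k + i} > i} (with inf ∅ = ∞), T_{k+1} := T_k + S_k + 1 on {S_k < ∞}, and N := inf{k ≥ 1 : S_k = ∞}. Then N is distributed as a geometric random variable with success parameter P(τ₁ = 1), i.e. P(N = k) = P(τ₁ = 1)·(1 − P(τ₁ = 1))^{k−1} for every k ≥ 1; moreover τ₁ = T_N = N + Σ_{k=1}^{N−1} S_k almost surely. -/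
open MeasureTheory ProbabilityTheory Filter ENNReal
open scoped Topology

/-- `S(t) := inf {i ≥ 0 : K_{t+i} > i}` (with `inf ∅ = ∞`): the waiting time, started at
position `t`, for a memory variable reaching back to before `t`. -/
noncomputable def Sgen {Ω : Type*} (K : ℕ → Ω → ℕ) (t : ℕ) (ω : Ω) : ℕ∞ :=
  sInf {m : ℕ∞ | ∃ i : ℕ, m = (i : ℕ∞) ∧ i < K (t + i) ω}

/-- `T₁ := 1` and `T_{k+1} := T_k + S_k + 1`, where `S_k := S(T_k)` (on `{T_k < ∞}`;
the value `⊤` propagates since `⊤ + x = ⊤` in `ℕ∞`). -/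
noncomputable def Tgen {Ω : Type*} (K : ℕ → Ω → ℕ) : ℕ → Ω → ℕ∞
  | 0, _ => 1
  | 1, _ => 1
  | (k + 2), ω =>
      Tgen K (k + 1) ω + Sgen K (ENat.toNat (Tgen K (k + 1) ω)) ω + 1

/-- `S_k := S(T_k)`. -/
noncomputable def Sk {Ω : Type*} (K : ℕ → Ω → ℕ) (k : ℕ) (ω : Ω) : ℕ∞ :=
  Sgen K (ENat.toNat (Tgen K k ω)) ω

/-- `N := inf {k ≥ 1 : S_k = ∞}`. -/
noncomputable def Ngen {Ω : Type*} (K : ℕ → Ω → ℕ) (ω : Ω) : ℕ∞ :=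
  sInf {m : ℕ∞ | ∃ k : ℕ, m = (k : ℕ∞) ∧ 1 ≤ k ∧ Sk K k ω = ⊤}

/-! ### sInf helpers -/

lemma sInf_natSet_eq_top (Q : ℕ → Prop) :
    sInf {m : ℕ∞ | ∃ n : ℕ, m = (n : ℕ∞) ∧ Q n} = ⊤ ↔ ∀ n, ¬ Q n := by
  rw [sInf_eq_top]
  constructor
  · intro h n hQ
    exact absurd (h _ ⟨n, rfl, hQ⟩) (by simp)
  · rintro h m ⟨n, rfl, hQ⟩
    exact absurd hQ (h n)

lemma sInf_natSet_eq_coe (Q : ℕ → Prop) (k : ℕ) :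
    sInf {m : ℕ∞ | ∃ n : ℕ, m = (n : ℕ∞) ∧ Q n} = (k : ℕ∞) ↔ Q k ∧ ∀ j < k, ¬ Q j := by
  classical
  constructor
  · intro h
    have hne : ∃ n, Q n := by
      by_contra hc
      push_neg at hc
      rw [(sInf_natSet_eq_top Q).2 hc] at h
      exact (by simp at h)
    have hle : sInf {m : ℕ∞ | ∃ n : ℕ, m = (n : ℕ∞) ∧ Q n} ≤ (Nat.find hne : ℕ∞) :=
      sInf_le ⟨Nat.find hne, rfl, Nat.find_spec hne⟩
    have hge : (Nat.find hne : ℕ∞) ≤ sInf {m : ℕ∞ | ∃ n : ℕ, m = (n : ℕ∞) ∧ Q n} := by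
      refine le_sInf ?_
      rintro m ⟨n, rfl, hQ⟩
      exact_mod_cast Nat.find_min' hne hQ
    have : ((Nat.find hne : ℕ∞)) = (k : ℕ∞) := le_antisymm (h ▸ hge) (h ▸ hle)
    have hk : Nat.find hne = k := by exact_mod_cast this
    subst hk
    exact ⟨Nat.find_spec hne, fun j hj => Nat.find_min hne hj⟩
  · rintro ⟨hk, hmin⟩
    refine le_antisymm (sInf_le ⟨k, rfl, hk⟩) (le_sInf ?_)
    rintro m ⟨n, rfl, hQ⟩
    have : k ≤ n := not_lt.1 fun hlt => hmin n hlt hQ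
    exact_mod_cast this

/-! ### Sgen / tau1 / Ngen characterizations -/

lemma Sgen_eq_top_iff {Ω : Type*} (K : ℕ → Ω → ℕ) (t : ℕ) (ω : Ω) :
    Sgen K t ω = ⊤ ↔ ∀ i, K (t + i) ω ≤ i := by
  rw [Sgen, sInf_natSet_eq_top]
  simp [not_lt]

lemma Sgen_eq_coe_iff {Ω : Type*} (K : ℕ → Ω → ℕ) (t s : ℕ) (ω : Ω) :
    Sgen K t ω = (s : ℕ∞) ↔ (∀ i < s, K (t + i) ω ≤ i) ∧ s < K (t + s) ω := by
  rw [Sgen, sInf_natSet_eq_coe]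
  constructor
  · rintro ⟨h1, h2⟩
    exact ⟨fun i hi => not_lt.1 (h2 i hi), h1⟩
  · rintro ⟨h1, h2⟩
    exact ⟨h2, fun j hj => not_lt.2 (h1 j hj)⟩

lemma tau1_eq_one_iff {Ω : Type*} (K : ℕ → Ω → ℕ) (ω : Ω) :
    tau1 K ω = 1 ↔ Sgen K 1 ω = ⊤ := by
  rw [Sgen_eq_top_iff, tau1, show (1 : ℕ∞) = ((1 : ℕ) : ℕ∞) by norm_cast, sInf_natSet_eq_coe]
  constructor
  · rintro ⟨⟨-, h⟩, -⟩
    exact h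
  · intro h
    exact ⟨⟨le_refl 1, h⟩, fun j hj => by rintro ⟨h1, -⟩; omega⟩

lemma Ngen_eq_coe_iff {Ω : Type*} (K : ℕ → Ω → ℕ) (k : ℕ) (ω : Ω) :
    Ngen K ω = (k : ℕ∞) ↔ (1 ≤ k ∧ Sk K k ω = ⊤) ∧ ∀ j < k, ¬ (1 ≤ j ∧ Sk K j ω = ⊤) := by
  rw [Ngen, sInf_natSet_eq_coe]

/-! ### Trajectory lists -/

def tlist : List ℕ → ℕ
  | [] => 1
  | s :: l => tlist l + s + 1

lemma one_le_tlist (l : List ℕ) : 1 ≤ tlist l := by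
  cases l with
  | nil => exact le_refl 1
  | cons s l => simp [tlist]

lemma tlist_eq (l : List ℕ) : tlist l = l.sum + l.length + 1 := by
  induction l with
  | nil => rfl
  | cons s l ih => simp [tlist, ih]; omega

def Ev {Ω : Type*} (K : ℕ → Ω → ℕ) : List ℕ → Set Ω
  | [] => Set.univ
  | s :: l => Ev K l ∩ {ω | Sgen K (tlist l) ω = (s : ℕ∞)}

lemma Ev_drop {Ω : Type*} (K : ℕ → Ω → ℕ) {ω : Ω} :
    ∀ (l : List ℕ) (n : ℕ), ω ∈ Ev K l → ω ∈ Ev K (l.drop n)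
  | _, 0, h => h
  | [], n + 1, _ => by trivial
  | s :: l, n + 1, h => Ev_drop K l n h.1

lemma Tgen_of_Ev {Ω : Type*} (K : ℕ → Ω → ℕ) {ω : Ω} :
    ∀ l : List ℕ, ω ∈ Ev K l → Tgen K (l.length + 1) ω = ((tlist l : ℕ) : ℕ∞)
  | [], _ => by simp [Tgen, tlist]
  | s :: l, h => by
      have ih := Tgen_of_Ev K l h.1
      have h2 : Sgen K (tlist l) ω = (s : ℕ∞) := h.2
      show Tgen K (l.length + 2) ω = _
      rw [Tgen, ih, ENat.toNat_coe, h2]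
      show ((tlist l : ℕ) : ℕ∞) + (s : ℕ∞) + 1 = ((tlist (s :: l) : ℕ) : ℕ∞)
      rw [show tlist (s :: l) = tlist l + s + 1 from rfl]
      push_cast
      ring

lemma Sk_of_Ev {Ω : Type*} (K : ℕ → Ω → ℕ) {ω : Ω} (l : List ℕ) (h : ω ∈ Ev K l) :
    Sk K (l.length + 1) ω = Sgen K (tlist l) ω := by
  rw [Sk, Tgen_of_Ev K l h, ENat.toNat_coe]

lemma Sk_cons_of_Ev {Ω : Type*} (K : ℕ → Ω → ℕ) {ω : Ω} (s : ℕ) (l : List ℕ)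
    (h : ω ∈ Ev K (s :: l)) : Sk K (l.length + 1) ω = (s : ℕ∞) := by
  rw [Sk_of_Ev K l h.1]; exact h.2

lemma Sk_ne_top_of_Ev {Ω : Type*} (K : ℕ → Ω → ℕ) {ω : Ω} (l : List ℕ) (h : ω ∈ Ev K l)
    (j : ℕ) (h1 : 1 ≤ j) (h2 : j ≤ l.length) : Sk K j ω ≠ ⊤ := by
  have hdrop := Ev_drop K l (l.length - j) h
  have hlen : (l.drop (l.length - j)).length = j := by
    rw [List.length_drop]; omega
  obtain ⟨s, t, hst⟩ : ∃ s t, l.drop (l.length - j) = s :: t := by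
    cases hl : l.drop (l.length - j) with
    | nil => rw [hl] at hlen; simp at hlen; omega
    | cons s t => exact ⟨s, t, rfl⟩
  rw [hst] at hdrop hlen
  simp at hlen
  have := Sk_cons_of_Ev K s t hdrop
  rw [show t.length + 1 = j by omega] at this
  rw [this]
  simp

lemma exists_Ev {Ω : Type*} (K : ℕ → Ω → ℕ) {ω : Ω} :
    ∀ m : ℕ, (∀ j, 1 ≤ j → j ≤ m → Sk K j ω ≠ ⊤) → ∃ l : List ℕ, l.length = m ∧ ω ∈ Ev K l
  | 0, _ => ⟨[], rfl, trivial⟩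
  | m + 1, h => by
      obtain ⟨l, hlen, hEv⟩ := exists_Ev K m (fun j h1 h2 => h j h1 (by omega))
      have hne : Sk K (m + 1) ω ≠ ⊤ := h (m + 1) (by omega) (le_refl _)
      rw [show m + 1 = l.length + 1 by omega, Sk_of_Ev K l hEv] at hne
      obtain ⟨s, hs⟩ := Option.ne_none_iff_exists.1 hne
      exact ⟨s :: l, by simp [hlen], hEv, hs.symm⟩

lemma Ev_unique {Ω : Type*} (K : ℕ → Ω → ℕ) {ω : Ω} :
    ∀ l l' : List ℕ, l.length = l'.length → ω ∈ Ev K l → ω ∈ Ev K l' → l = l'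
  | [], [], _, _, _ => rfl
  | s :: l, s' :: l', hlen, h, h' => by
      have hl : l = l' := Ev_unique K l l' (by simpa using hlen) h.1 h'.1
      subst hl
      have : ((s : ℕ∞)) = (s' : ℕ∞) := h.2.symm.trans h'.2
      have : s = s' := by exact_mod_cast this
      rw [this]

lemma no_block_before {Ω : Type*} (K : ℕ → Ω → ℕ) {ω : Ω} :
    ∀ l : List ℕ, ω ∈ Ev K l → ∀ n, 1 ≤ n → n < tlist l → ∃ i, i < K (n + i) ω
  | [], _, n, h1, h2 => absurd h2 (by simp [tlist]; omega)
  | s :: l, h, n, h1, h2 => by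
      rcases lt_or_ge n (tlist l) with hn | hn
      · exact no_block_before K l h.1 n h1 hn
      · have hs : s < K (tlist l + s) ω := ((Sgen_eq_coe_iff K _ s ω).1 h.2).2
        refine ⟨tlist l + s - n, ?_⟩
        have hb : n ≤ tlist l + s := by
          have : n < tlist l + s + 1 := by simpa [tlist] using h2
          omega
        rw [show n + (tlist l + s - n) = tlist l + s by omega]
        exact lt_of_le_of_lt (by omega) hs

lemma sum_Sk_of_Ev {Ω : Type*} (K : ℕ → Ω → ℕ) {ω : Ω} :
    ∀ l : List ℕ, ω ∈ Ev K l →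
      ∑ j ∈ Finset.Icc 1 l.length, Sk K j ω = ((l.sum : ℕ) : ℕ∞)
  | [], _ => by simp
  | s :: l, h => by
      rw [show (s :: l).length = l.length + 1 from rfl,
        Finset.sum_Icc_succ_top (by omega : 1 ≤ l.length + 1),
        sum_Sk_of_Ev K l h.1, Sk_cons_of_Ev K s l h, List.sum_cons]
      push_cast
      ring

/-! ### Measure-theoretic lemmas -/

def DD (s : ℕ) : ℕ → Set ℕ := fun i => if i < s then Set.Iic i else Set.Ioi s

lemma DD_meas (s i : ℕ) : MeasurableSet (DD s i) := by
  unfold DD; split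
  · exact measurableSet_Iic
  · exact measurableSet_Ioi

lemma Sgen_eq_coe_iff' {Ω : Type*} (K : ℕ → Ω → ℕ) (t s : ℕ) (ω : Ω) :
    Sgen K t ω = (s : ℕ∞) ↔ ∀ j < s + 1, K (t + j) ω ∈ DD s j := by
  rw [Sgen_eq_coe_iff]
  constructor
  · rintro ⟨h1, h2⟩ j hj
    by_cases hjs : j < s
    · simpa [DD, hjs] using h1 j hjs
    · have : j = s := by omega
      subst this
      simpa [DD, hjs] using h2
  · intro h
    refine ⟨fun i hi => ?_, ?_⟩
    · have := h i (by omega); simpa [DD, hi] using this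
    · have := h s (by omega); simpa [DD] using this

lemma A_eq {Ω : Type*} (K : ℕ → Ω → ℕ) (t s : ℕ) :
    {ω | Sgen K t ω = (s : ℕ∞)} = ⋂ i ∈ Finset.range (s + 1), K (t + i) ⁻¹' DD s i := by
  ext ω
  simp only [Set.mem_setOf_eq, Sgen_eq_coe_iff' K t s ω, Set.mem_iInter, Finset.mem_range,
    Set.mem_preimage]

lemma measurableSet_SgenCoe {Ω : Type*} [MeasurableSpace Ω] (K : ℕ → Ω → ℕ)
    (hmeas : ∀ n, Measurable (K n)) (t s : ℕ) :
    MeasurableSet {ω | Sgen K t ω = (s : ℕ∞)} := by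
  rw [A_eq]
  exact Finset.measurableSet_biInter _ fun i _ => (hmeas _) (DD_meas s i)

lemma measurableSet_SgenTop {Ω : Type*} [MeasurableSpace Ω] (K : ℕ → Ω → ℕ)
    (hmeas : ∀ n, Measurable (K n)) (t : ℕ) :
    MeasurableSet {ω | Sgen K t ω = ⊤} := by
  have : {ω | Sgen K t ω = ⊤} = ⋂ i, K (t + i) ⁻¹' Set.Iic i := by
    ext ω
    simp [Sgen_eq_top_iff, Set.mem_iInter]
  rw [this]
  exact MeasurableSet.iInter fun i => (hmeas _) measurableSet_Iic

lemma measurableSet_Ev {Ω : Type*} [MeasurableSpace Ω] (K : ℕ → Ω → ℕ)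
    (hmeas : ∀ n, Measurable (K n)) : ∀ l : List ℕ, MeasurableSet (Ev K l)
  | [] => MeasurableSet.univ
  | s :: l => (measurableSet_Ev K hmeas l).inter (measurableSet_SgenCoe K hmeas _ s)

lemma map_eq_zero' {Ω : Type*} [MeasurableSpace Ω] (P : Measure Ω) (K : ℕ → Ω → ℕ)
    (hmeas : ∀ n, Measurable (K n)) (hident : ∀ n, P.map (K n) = P.map (K 0))
    (n : ℕ) (C : Set ℕ) (hC : MeasurableSet C) : P (K n ⁻¹' C) = P (K 0 ⁻¹' C) := by
  rw [← Measure.map_apply (hmeas n) hC, hident n, Measure.map_apply (hmeas 0) hC]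

lemma meas_iInter_preimage {Ω : Type*} [MeasurableSpace Ω] (P : Measure Ω) (K : ℕ → Ω → ℕ)
    (hmeas : ∀ n, Measurable (K n))
    (hindep : iIndepFun K P)
    (hident : ∀ n, P.map (K n) = P.map (K 0))
    (t : ℕ) (F : Finset ℕ) (D : ℕ → Set ℕ) (hD : ∀ i, MeasurableSet (D i)) :
    P (⋂ i ∈ F, K (t + i) ⁻¹' D i) = ∏ i ∈ F, P (K 0 ⁻¹' D i) := by
  classical
  have hinj : ∀ a ∈ F, ∀ b ∈ F, t + a = t + b → a = b := fun a _ b _ h => by omega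
  have h := hindep.measure_inter_preimage_eq_mul (S := F.image (t + ·))
    (sets := fun n => D (n - t)) (fun i _ => hD _)
  rw [Finset.set_biInter_finset_image, Finset.prod_image hinj] at h
  simp only [Nat.add_sub_cancel_left] at h
  rw [h]
  exact Finset.prod_congr rfl fun i _ =>
    map_eq_zero' P K hmeas hident (t + i) (D i) (hD i)

lemma Ev_inter_tail {Ω : Type*} [MeasurableSpace Ω] (P : Measure Ω) [IsProbabilityMeasure P] (K : ℕ → Ω → ℕ)
    (hmeas : ∀ n, Measurable (K n))
    (hindep : iIndepFun K P)
    (hident : ∀ n, P.map (K n) = P.map (K 0)) :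
    ∀ (l : List ℕ) (F : Finset ℕ) (D : ℕ → Set ℕ), (∀ i, MeasurableSet (D i)) →
      P (Ev K l ∩ ⋂ i ∈ F, K (tlist l + i) ⁻¹' D i)
        = P (Ev K l) * ∏ i ∈ F, P (K 0 ⁻¹' D i)
  | [], F, D, hD => by
      simp only [Ev, Set.univ_inter, tlist]
      rw [meas_iInter_preimage P K hmeas hindep hident 1 F D hD, measure_univ, one_mul]
  | s :: l, F, D, hD => by
      classical
      set E : ℕ → Set ℕ := fun i => if i < s + 1 then DD s i else D (i - (s + 1)) with hE
      have hEmeas : ∀ i, MeasurableSet (E i) := fun i => by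
        rw [hE]; dsimp only; split
        · exact DD_meas s i
        · exact hD _
      have hset : Ev K (s :: l) ∩ ⋂ i ∈ F, K (tlist (s :: l) + i) ⁻¹' D i
          = Ev K l ∩ ⋂ i ∈ Finset.range (s + 1) ∪ F.image (· + (s + 1)),
              K (tlist l + i) ⁻¹' E i := by
        ext ω
        simp only [Ev, Set.mem_inter_iff, Set.mem_setOf_eq, Set.mem_iInter, Set.mem_preimage,
          Finset.mem_union, Finset.mem_range, Finset.mem_image, and_assoc]
        constructor
        · rintro ⟨h1, h2, h3⟩
          refine ⟨h1, fun j hj => ?_⟩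
          rcases hj with hj | ⟨i, hiF, rfl⟩
          · rw [hE]; dsimp only; rw [if_pos hj]
            exact (Sgen_eq_coe_iff' K _ s ω).1 h2 j hj
          · rw [hE]; dsimp only; rw [if_neg (by omega), Nat.add_sub_cancel]
            have hidx : tlist l + (i + (s + 1)) = tlist (s :: l) + i := by
              simp [tlist]; omega
            rw [hidx]
            exact h3 i hiF
        · rintro ⟨h1, h2⟩
          refine ⟨h1, ?_, ?_⟩
          · refine (Sgen_eq_coe_iff' K _ s ω).2 fun j hj => ?_
            have := h2 j (Or.inl hj)
            rw [hE] at this; dsimp only at this; rwa [if_pos hj] at this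
          · intro i hiF
            have := h2 (i + (s + 1)) (Or.inr ⟨i, hiF, rfl⟩)
            rw [hE] at this; dsimp only at this
            rw [if_neg (by omega), Nat.add_sub_cancel] at this
            have hidx : tlist l + (i + (s + 1)) = tlist (s :: l) + i := by
              simp [tlist]; omega
            rwa [hidx] at this
      have hdisj : Disjoint (Finset.range (s + 1)) (F.image (· + (s + 1))) := by
        rw [Finset.disjoint_left]
        intro j hj hj'
        simp only [Finset.mem_range] at hj
        simp only [Finset.mem_image] at hj'
        obtain ⟨i, -, rfl⟩ := hj'
        omega
      have hinj : ∀ a ∈ F, ∀ b ∈ F, a + (s + 1) = b + (s + 1) → a = b :=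
        fun a _ b _ h => by omega
      have hrec := Ev_inter_tail P K hmeas hindep hident l
        (Finset.range (s + 1) ∪ F.image (· + (s + 1))) E hEmeas
      have hA : P (Ev K (s :: l))
          = P (Ev K l) * ∏ i ∈ Finset.range (s + 1), P (K 0 ⁻¹' E i) := by
        have h0 := Ev_inter_tail P K hmeas hindep hident l (Finset.range (s + 1)) (DD s)
          (DD_meas s)
        have : Ev K (s :: l) = Ev K l ∩ ⋂ i ∈ Finset.range (s + 1),
            K (tlist l + i) ⁻¹' DD s i := by
          show Ev K l ∩ _ = _
          rw [A_eq K (tlist l) s]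
        rw [this, h0]
        congr 1
        refine Finset.prod_congr rfl fun i hi => ?_
        rw [hE]; dsimp only
        rw [if_pos (Finset.mem_range.1 hi)]
      rw [hset, hrec, Finset.prod_union hdisj, Finset.prod_image hinj, hA]
      have : ∀ i ∈ F, P (K 0 ⁻¹' E (i + (s + 1))) = P (K 0 ⁻¹' D i) := by
        intro i _
        rw [hE]; dsimp only
        rw [if_neg (by omega), Nat.add_sub_cancel]
      rw [Finset.prod_congr rfl this, mul_assoc]

lemma Ev_inter_top {Ω : Type*} [MeasurableSpace Ω] (P : Measure Ω) [IsProbabilityMeasure P]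
    (K : ℕ → Ω → ℕ) (hmeas : ∀ n, Measurable (K n))
    (hindep : iIndepFun K P)
    (hident : ∀ n, P.map (K n) = P.map (K 0)) (l : List ℕ) :
    P (Ev K l ∩ {ω | Sgen K (tlist l) ω = ⊤})
      = P (Ev K l) * P {ω | Sgen K 1 ω = ⊤} := by
  classical
  set c : ℕ → ℝ≥0∞ := fun m => ∏ i ∈ Finset.range m, P (K 0 ⁻¹' Set.Iic i) with hc
  have key : ∀ l' : List ℕ,
      Tendsto (fun m => P (Ev K l') * c m) atTop
        (𝓝 (P (Ev K l' ∩ {ω | Sgen K (tlist l') ω = ⊤}))) := by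
    intro l'
    have hseteq : (⋂ m, Ev K l' ∩ ⋂ i ∈ Finset.range m, K (tlist l' + i) ⁻¹' Set.Iic i)
        = Ev K l' ∩ {ω | Sgen K (tlist l') ω = ⊤} := by
      ext ω
      simp only [Set.mem_iInter, Set.mem_inter_iff, Set.mem_preimage, Set.mem_setOf_eq,
        Finset.mem_range, Set.mem_Iic, Sgen_eq_top_iff]
      constructor
      · intro h
        exact ⟨(h 0).1, fun i => (h (i + 1)).2 i (by omega)⟩
      · intro h m
        exact ⟨h.1, fun i _ => h.2 i⟩
    have hmono : Antitone (fun m => Ev K l' ∩ ⋂ i ∈ Finset.range m, K (tlist l' + i) ⁻¹' Set.Iic i) := by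
      intro a b hab
      apply Set.inter_subset_inter_right
      intro ω hω
      simp only [Set.mem_iInter, Finset.mem_range] at hω ⊢
      exact fun i hi => hω i (by omega)
    have hms : ∀ m, MeasurableSet
        (Ev K l' ∩ ⋂ i ∈ Finset.range m, K (tlist l' + i) ⁻¹' Set.Iic i) := by
      intro m
      exact (measurableSet_Ev K hmeas l').inter
        (Finset.measurableSet_biInter _ fun i _ => (hmeas _) measurableSet_Iic)
    have ht := tendsto_measure_iInter_atTop (μ := P)
      (fun m => (hms m).nullMeasurableSet) hmono ⟨0, measure_ne_top P _⟩
    rw [hseteq] at ht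
    refine ht.congr fun m => ?_
    exact (Ev_inter_tail P K hmeas hindep hident l' (Finset.range m) (fun i => Set.Iic i)
      (fun i => measurableSet_Iic)).symm ▸ rfl
  have h1 : Tendsto c atTop (𝓝 (P {ω | Sgen K 1 ω = ⊤})) := by
    have := key []
    simpa [Ev, tlist] using this
  have h3 : Tendsto (fun m => P (Ev K l) * c m) atTop
      (𝓝 (P (Ev K l) * P {ω | Sgen K 1 ω = ⊤})) :=
    ENNReal.Tendsto.const_mul h1 (Or.inr (measure_ne_top P _))
  exact tendsto_nhds_unique (key l) h3

def Ls (m : ℕ) : Set (List ℕ) := {l : List ℕ | l.length = m}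

lemma Ls_pairwiseDisjoint {Ω : Type*} (K : ℕ → Ω → ℕ) (m : ℕ) (f : List ℕ → Set Ω)
    (hf : ∀ l, f l ⊆ Ev K l) : (Ls m).PairwiseDisjoint f :=
  fun l hl l' hl' hne => Set.disjoint_left.2 fun ω h h' =>
    hne (Ev_unique K l l' (hl.trans hl'.symm) (hf l h) (hf l' h'))

lemma Ev_diff_top {Ω : Type*} [MeasurableSpace Ω] (P : Measure Ω) [IsProbabilityMeasure P]
    (K : ℕ → Ω → ℕ) (hmeas : ∀ n, Measurable (K n))
    (hindep : iIndepFun K P)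
    (hident : ∀ n, P.map (K n) = P.map (K 0)) (l : List ℕ) :
    P (Ev K l \ {ω | Sgen K (tlist l) ω = ⊤})
      = P (Ev K l) * (1 - P {ω | Sgen K 1 ω = ⊤}) := by
  have hB := Ev_inter_top P K hmeas hindep hident l
  have hsum := measure_inter_add_diff (μ := P) (Ev K l)
    (measurableSet_SgenTop K hmeas (tlist l))
  have hple : P {ω | Sgen K 1 ω = ⊤} ≤ 1 := prob_le_one
  have h2 : P (Ev K l) * P {ω | Sgen K 1 ω = ⊤}
      + P (Ev K l) * (1 - P {ω | Sgen K 1 ω = ⊤}) = P (Ev K l) := by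
    rw [← mul_add, add_tsub_cancel_of_le hple, mul_one]
  rw [hB] at hsum
  exact (ENNReal.add_right_inj
    (ENNReal.mul_ne_top (measure_ne_top P _) (measure_ne_top P _))).1 (hsum.trans h2.symm)

lemma meas_W {Ω : Type*} [MeasurableSpace Ω] (P : Measure Ω) [IsProbabilityMeasure P]
    (K : ℕ → Ω → ℕ) (hmeas : ∀ n, Measurable (K n))
    (hindep : iIndepFun K P)
    (hident : ∀ n, P.map (K n) = P.map (K 0)) :
    ∀ m : ℕ, P (⋃ l ∈ Ls m, Ev K l) = (1 - P {ω | Sgen K 1 ω = ⊤}) ^ m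
  | 0 => by
      have : Ls 0 = {([] : List ℕ)} := by
        ext l; simp [Ls, List.length_eq_zero_iff]
      rw [this]
      simp [Ev]
  | m + 1 => by
      have hW : (⋃ l ∈ Ls (m + 1), Ev K l)
          = ⋃ l ∈ Ls m, (Ev K l \ {ω | Sgen K (tlist l) ω = ⊤}) := by
        ext ω
        simp only [Set.mem_iUnion, Ls, Set.mem_setOf_eq, exists_prop, Set.mem_diff]
        constructor
        · rintro ⟨l', hlen, hEv⟩
          obtain ⟨s, l, rfl⟩ : ∃ s l, l' = s :: l := by
            cases l' with
            | nil => simp at hlen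
            | cons s l => exact ⟨s, l, rfl⟩
          refine ⟨l, by simpa using hlen, hEv.1, ?_⟩
          rw [show Sgen K (tlist l) ω = (s : ℕ∞) from hEv.2]
          simp
        · rintro ⟨l, hlen, hEv, hne⟩
          obtain ⟨s, hs⟩ := Option.ne_none_iff_exists.1 hne
          exact ⟨s :: l, by simp [hlen], hEv, hs.symm⟩
      have hmeasB : ∀ l : List ℕ, MeasurableSet (Ev K l \ {ω | Sgen K (tlist l) ω = ⊤}) :=
        fun l => (measurableSet_Ev K hmeas l).diff (measurableSet_SgenTop K hmeas _)
      rw [hW, measure_biUnion (Set.to_countable _)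
        (Ls_pairwiseDisjoint K m _ (fun l => Set.diff_subset)) (fun l _ => hmeasB l)]
      have : ∀ l : ↥(Ls m), P (Ev K (l : List ℕ) \ {ω | Sgen K (tlist (l : List ℕ)) ω = ⊤})
          = P (Ev K (l : List ℕ)) * (1 - P {ω | Sgen K 1 ω = ⊤}) :=
        fun l => Ev_diff_top P K hmeas hindep hident l
      rw [tsum_congr this, ENNReal.tsum_mul_right,
        ← measure_biUnion (Set.to_countable _)
          (Ls_pairwiseDisjoint K m _ (fun l => subset_refl _))
          (fun l _ => measurableSet_Ev K hmeas l),
        meas_W P K hmeas hindep hident m, pow_succ]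

lemma Nset_eq {Ω : Type*} (K : ℕ → Ω → ℕ) (k : ℕ) (hk : 1 ≤ k) :
    {ω | Ngen K ω = (k : ℕ∞)}
      = ⋃ l ∈ Ls (k - 1), (Ev K l ∩ {ω | Sgen K (tlist l) ω = ⊤}) := by
  ext ω
  simp only [Set.mem_setOf_eq, Set.mem_iUnion, Ls, exists_prop, Set.mem_inter_iff]
  rw [Ngen_eq_coe_iff]
  constructor
  · rintro ⟨⟨hk1, htop⟩, hmin⟩
    have hne : ∀ j, 1 ≤ j → j ≤ k - 1 → Sk K j ω ≠ ⊤ :=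
      fun j h1 h2 htp => hmin j (by omega) ⟨h1, htp⟩
    obtain ⟨l, hlen, hEv⟩ := exists_Ev K (k - 1) hne
    have hT := Sk_of_Ev K l hEv
    rw [hlen, show k - 1 + 1 = k by omega] at hT
    exact ⟨l, hlen, hEv, hT.symm.trans htop⟩
  · rintro ⟨l, hlen, hEv, hB⟩
    have hT := Sk_of_Ev K l hEv
    rw [hlen, show k - 1 + 1 = k by omega] at hT
    refine ⟨⟨hk, hT.trans hB⟩, ?_⟩
    rintro j hj ⟨hj1, hjtop⟩
    exact Sk_ne_top_of_Ev K l hEv j hj1 (by omega) hjtop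

lemma meas_N {Ω : Type*} [MeasurableSpace Ω] (P : Measure Ω) [IsProbabilityMeasure P]
    (K : ℕ → Ω → ℕ) (hmeas : ∀ n, Measurable (K n))
    (hindep : iIndepFun K P)
    (hident : ∀ n, P.map (K n) = P.map (K 0)) (k : ℕ) (hk : 1 ≤ k) :
    P {ω | Ngen K ω = (k : ℕ∞)}
      = P {ω | Sgen K 1 ω = ⊤} * (1 - P {ω | Sgen K 1 ω = ⊤}) ^ (k - 1) := by
  rw [Nset_eq K k hk,
    measure_biUnion (Set.to_countable _)
      (Ls_pairwiseDisjoint K (k - 1) _ (fun l => Set.inter_subset_left))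
      (fun l _ => (measurableSet_Ev K hmeas l).inter (measurableSet_SgenTop K hmeas _))]
  have : ∀ l : ↥(Ls (k - 1)),
      P (Ev K (l : List ℕ) ∩ {ω | Sgen K (tlist (l : List ℕ)) ω = ⊤})
        = P (Ev K (l : List ℕ)) * P {ω | Sgen K 1 ω = ⊤} :=
    fun l => Ev_inter_top P K hmeas hindep hident l
  rw [tsum_congr this, ENNReal.tsum_mul_right,
    ← measure_biUnion (Set.to_countable _)
      (Ls_pairwiseDisjoint K (k - 1) _ (fun l => subset_refl _))
      (fun l _ => measurableSet_Ev K hmeas l),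
    meas_W P K hmeas hindep hident (k - 1), mul_comm]

/-- If `P(τ₁ = 1) > 0` then `N` is geometric with success parameter
`P(τ₁ = 1)`, i.e. `P(N = k) = P(τ₁ = 1)·(1 − P(τ₁ = 1))^{k−1}` for all `k ≥ 1`; moreover,
almost surely `τ₁ = T_N = N + Σ_{k=1}^{N−1} S_k`. -/
theorem tau1_geometric_structure {Ω : Type*} [MeasurableSpace Ω] (P : Measure Ω)
    [IsProbabilityMeasure P] (K : ℕ → Ω → ℕ) (hmeas : ∀ n, Measurable (K n))
    (hindep : iIndepFun K P)
    (hident : ∀ n, P.map (K n) = P.map (K 0))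
    (hpos : 0 < P {ω | tau1 K ω = 1}) :
    (∀ k : ℕ, 1 ≤ k →
        P {ω | Ngen K ω = (k : ℕ∞)} =
          P {ω | tau1 K ω = 1} * (1 - P {ω | tau1 K ω = 1}) ^ (k - 1)) ∧
      (∀ᵐ ω ∂P, ∃ k : ℕ, 1 ≤ k ∧ Ngen K ω = (k : ℕ∞) ∧
        tau1 K ω = Tgen K k ω ∧
        tau1 K ω = (k : ℕ∞) + ∑ j ∈ Finset.Icc 1 (k - 1), Sk K j ω) := by
  have hset1 : {ω | tau1 K ω = 1} = {ω | Sgen K 1 ω = ⊤} :=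
    Set.ext fun ω => tau1_eq_one_iff K ω
  rw [hset1] at hpos ⊢
  set p : ℝ≥0∞ := P {ω | Sgen K 1 ω = ⊤} with hp
  have hp0 : p ≠ 0 := hpos.ne'
  have hptop : p ≠ ⊤ := measure_ne_top P _
  have hple : p ≤ 1 := prob_le_one
  refine ⟨fun k hk => meas_N P K hmeas hindep hident k hk, ?_⟩
  -- the a.s. statement
  set G : Set Ω := ⋃ k : ℕ, {ω | Ngen K ω = ((k + 1 : ℕ) : ℕ∞)} with hG
  have hmeasN : ∀ k : ℕ, 1 ≤ k → MeasurableSet {ω | Ngen K ω = (k : ℕ∞)} := by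
    intro k hk
    rw [Nset_eq K k hk]
    exact MeasurableSet.biUnion (Set.to_countable _)
      (fun l _ => (measurableSet_Ev K hmeas l).inter (measurableSet_SgenTop K hmeas _))
  have hGmeas : MeasurableSet G :=
    MeasurableSet.iUnion fun k => hmeasN (k + 1) (by omega)
  have hPG : P G = 1 := by
    rw [hG, measure_iUnion ?_ (fun k => hmeasN (k + 1) (by omega))]
    · have : ∀ k : ℕ, P {ω | Ngen K ω = ((k + 1 : ℕ) : ℕ∞)} = p * (1 - p) ^ k := by
        intro k
        rw [meas_N P K hmeas hindep hident (k + 1) (by omega)]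
        simp [hp]
      rw [tsum_congr this, ENNReal.tsum_mul_left, ENNReal.tsum_geometric,
        ENNReal.sub_sub_cancel one_ne_top hple, ENNReal.mul_inv_cancel hp0 hptop]
    · intro i j hij
      simp only [Function.onFun]
      refine Set.disjoint_left.2 fun ω h h' => hij ?_
      simp only [Set.mem_setOf_eq] at h h'
      have : ((i + 1 : ℕ) : ℕ∞) = ((j + 1 : ℕ) : ℕ∞) := h.symm.trans h'
      have : i + 1 = j + 1 := by exact_mod_cast this
      omega
  have hae : ∀ᵐ ω ∂P, ω ∈ G := by
    rw [ae_iff]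
    have : {ω | ¬ ω ∈ G} = Gᶜ := rfl
    rw [this, measure_compl hGmeas (measure_ne_top P G), hPG, measure_univ, tsub_self]
  filter_upwards [hae] with ω hω
  obtain ⟨k, hk⟩ := Set.mem_iUnion.1 hω
  simp only [Set.mem_setOf_eq] at hk
  have hmem : ω ∈ ⋃ l ∈ Ls ((k + 1) - 1), (Ev K l ∩ {ω | Sgen K (tlist l) ω = ⊤}) := by
    rw [← Nset_eq K (k + 1) (by omega)]
    exact hk
  simp only [Set.mem_iUnion, exists_prop, Set.mem_inter_iff, Ls, Set.mem_setOf_eq] at hmem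
  obtain ⟨l, hlen, hEv, hB⟩ := hmem
  have hlen' : l.length = k := by simpa using hlen
  have hT : Tgen K (k + 1) ω = ((tlist l : ℕ) : ℕ∞) := by
    have := Tgen_of_Ev K l hEv
    rwa [hlen'] at this
  have htau : tau1 K ω = ((tlist l : ℕ) : ℕ∞) := by
    rw [tau1, sInf_natSet_eq_coe]
    refine ⟨⟨one_le_tlist l, (Sgen_eq_top_iff K (tlist l) ω).1 hB⟩, ?_⟩
    rintro j hj ⟨hj1, hjall⟩
    obtain ⟨i, hi⟩ := no_block_before K l hEv j hj1 hj
    exact absurd (hjall i) (not_le.2 hi)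
  refine ⟨k + 1, by omega, hk, by rw [htau, hT], ?_⟩
  have hsum := sum_Sk_of_Ev K l hEv
  rw [hlen'] at hsum
  rw [htau, show k + 1 - 1 = k from rfl, hsum]
  have htl : tlist l = l.sum + k + 1 := by rw [tlist_eq, hlen']
  rw [htl]
  push_cast
  ring
end

section
/- Suppose P(D₀) > 0. Then for every integer n ≥ 1, P(D_n | D₀) = P(K_i ≤ i for all 0 ≤ i ≤ n−1); in particular P(D_n | D₀) ≥ P(D₀) > 0. -/
open MeasureTheory ProbabilityTheory Filter ENNReal
open scoped Topology ProbabilityTheory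

/-- `D_n := {K_{n+i} ≤ i for all i ≥ 0}`, the event that `n` is a regeneration time. -/
def regEvent {Ω : Type*} (K : ℕ → Ω → ℕ) (n : ℕ) : Set Ω :=
  {ω | ∀ i : ℕ, K (n + i) ω ≤ i}

section aux

variable {Ω : Type*} [MeasurableSpace Ω] (P : Measure Ω) (K : ℕ → Ω → ℕ)

/-- the event that `K i ≤ i` for `i < n` (as first coordinates) and
`K (n+i) ≤ i` for `i < m`. -/
def cylEvent (n m : ℕ) : Set Ω :=
  {ω | ∀ i < n, K i ω ≤ i} ∩ {ω | ∀ i < m, K (n + i) ω ≤ i}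

lemma cylEvent_eq (n m : ℕ) :
    cylEvent K n m =
      ⋂ j ∈ (Finset.range n ∪ (Finset.range m).image (n + ·)),
        K j ⁻¹' Set.Iic (if j < n then j else j - n) := by
  ext ω
  simp only [cylEvent, Set.mem_inter_iff, Set.mem_setOf_eq, Set.mem_iInter,
    Finset.mem_union, Finset.mem_range, Finset.mem_image, Set.mem_preimage,
    Set.mem_Iic]
  constructor
  · rintro ⟨h1, h2⟩ j (hj | ⟨i, hi, rfl⟩)
    · simpa [hj] using h1 j hj
    · have : ¬ (n + i < n) := by omega
      simpa [this] using h2 i hi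
  · intro h
    refine ⟨fun i hi => by simpa [hi] using h i (Or.inl hi), fun i hi => ?_⟩
    have : ¬ (n + i < n) := by omega
    simpa [this] using h (n + i) (Or.inr ⟨i, hi, rfl⟩)

variable [IsProbabilityMeasure P]

lemma cylEvent_meas (hmeas : ∀ n, Measurable (K n))
    (hindep : iIndepFun K P)
    (hident : ∀ n, P.map (K n) = P.map (K 0)) (n m : ℕ) :
    P (cylEvent K n m) =
      (∏ i ∈ Finset.range n, P (K 0 ⁻¹' Set.Iic i)) *
        ∏ i ∈ Finset.range m, P (K 0 ⁻¹' Set.Iic i) := by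
  have hid : ∀ j i : ℕ, P (K j ⁻¹' Set.Iic i) = P (K 0 ⁻¹' Set.Iic i) := by
    intro j i
    have h1 : P.map (K j) (Set.Iic i) = P.map (K 0) (Set.Iic i) := by rw [hident j]
    rwa [Measure.map_apply (hmeas j) measurableSet_Iic,
      Measure.map_apply (hmeas 0) measurableSet_Iic] at h1
  have hdisj : Disjoint (Finset.range n) ((Finset.range m).image (n + ·)) := by
    simp only [Finset.disjoint_left, Finset.mem_range, Finset.mem_image]
    rintro j hj ⟨i, _, rfl⟩
    omega
  rw [cylEvent_eq,
    hindep.measure_inter_preimage_eq_mul _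
      (sets := fun j => Set.Iic (if j < n then j else j - n))
      (fun j _ => measurableSet_Iic),
    Finset.prod_union hdisj,
    Finset.prod_image (by intro a _ b _ h; simp only at h; omega)]
  congr 1
  · refine Finset.prod_congr rfl fun j hj => ?_
    rw [Finset.mem_range] at hj
    simp [hj, hid]
  · refine Finset.prod_congr rfl fun i _ => ?_
    have : ¬ (n + i < n) := by omega
    simp [this, hid]

lemma regEvent_eq_iInter (n : ℕ) :
    regEvent K n = ⋂ m : ℕ, {ω | ∀ i < m, K (n + i) ω ≤ i} := by
  ext ω
  simp only [regEvent, Set.mem_setOf_eq, Set.mem_iInter]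
  exact ⟨fun h m i _ => h i, fun h i => h (i + 1) i (by omega)⟩

lemma tendsto_cyl (hmeas : ∀ n, Measurable (K n)) (n : ℕ) :
    Tendsto (fun m => P (cylEvent K n m)) atTop
      (𝓝 (P ({ω | ∀ i < n, K i ω ≤ i} ∩ regEvent K n))) := by
  have hBm : ∀ m, MeasurableSet {ω | ∀ i < m, K (n + i) ω ≤ i} := by
    intro m
    have : {ω | ∀ i < m, K (n + i) ω ≤ i} =
        ⋂ i ∈ Finset.range m, K (n + i) ⁻¹' Set.Iic i := by
      ext ω; simp [Set.mem_iInter]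
    rw [this]
    exact Finset.measurableSet_biInter _ fun i _ => (hmeas _) measurableSet_Iic
  have hA : MeasurableSet {ω | ∀ i < n, K i ω ≤ i} := by
    have : {ω | ∀ i < n, K i ω ≤ i} = ⋂ i ∈ Finset.range n, K i ⁻¹' Set.Iic i := by
      ext ω; simp [Set.mem_iInter]
    rw [this]
    exact Finset.measurableSet_biInter _ fun i _ => (hmeas _) measurableSet_Iic
  have hset : {ω | ∀ i < n, K i ω ≤ i} ∩ regEvent K n = ⋂ m, cylEvent K n m := by
    rw [regEvent_eq_iInter, Set.inter_iInter]; rfl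
  rw [hset]
  refine tendsto_measure_iInter_atTop
    (fun m => ((hA.inter (hBm m)).nullMeasurableSet))
    (fun a b hab => Set.inter_subset_inter_right _ ?_)
    ⟨0, measure_ne_top _ _⟩
  intro ω hω i hi
  exact hω i (lt_of_lt_of_le hi hab)

end aux

/-- If `P(D₀) > 0`, then for every `n ≥ 1`,
`P(D_n | D₀) = P(K_i ≤ i for all 0 ≤ i ≤ n−1)`; in particular `P(D_n | D₀) ≥ P(D₀) > 0`. -/
theorem cond_regEvent {Ω : Type*} [MeasurableSpace Ω] (P : Measure Ω)
    [IsProbabilityMeasure P] (K : ℕ → Ω → ℕ) (hmeas : ∀ n, Measurable (K n))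
    (hindep : iIndepFun K P)
    (hident : ∀ n, P.map (K n) = P.map (K 0))
    (hpos : 0 < P (regEvent K 0)) :
    ∀ n : ℕ, 1 ≤ n →
      P[regEvent K n | regEvent K 0] = P {ω | ∀ i < n, K i ω ≤ i} ∧
        P (regEvent K 0) ≤ P[regEvent K n | regEvent K 0] := by
  intro n hn
  set q : ℕ → ℝ≥0∞ := fun i => P (K 0 ⁻¹' Set.Iic i) with hq
  -- P(A n) = ∏_{i<n} q i
  have hAn : P {ω | ∀ i < n, K i ω ≤ i} = ∏ i ∈ Finset.range n, q i := by
    have := cylEvent_meas P K hmeas hindep hident n 0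
    simpa [cylEvent] using this
  -- P(D₀) is the limit of ∏_{i<m} q i
  have h0 : Tendsto (fun m => ∏ i ∈ Finset.range m, q i) atTop
      (𝓝 (P (regEvent K 0))) := by
    have h := tendsto_cyl P K hmeas 0
    have heq : ∀ m, P (cylEvent K 0 m) = ∏ i ∈ Finset.range m, q i := by
      intro m
      simpa using cylEvent_meas P K hmeas hindep hident 0 m
    have hset : {ω | ∀ i < 0, K i ω ≤ i} ∩ regEvent K 0 = regEvent K 0 := by
      ext ω; simp
    rw [hset] at h
    exact h.congr heq
  -- P(A n ∩ D_n) = P(A n) * P(D₀)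
  have hmain : P ({ω | ∀ i < n, K i ω ≤ i} ∩ regEvent K n) =
      P {ω | ∀ i < n, K i ω ≤ i} * P (regEvent K 0) := by
    have h1 := tendsto_cyl P K hmeas n
    have h2 : Tendsto (fun m => P (cylEvent K n m)) atTop
        (𝓝 ((∏ i ∈ Finset.range n, q i) * P (regEvent K 0))) := by
      have := ENNReal.Tendsto.const_mul (a := ∏ i ∈ Finset.range n, q i) h0
        (Or.inr (ne_of_lt (lt_of_le_of_lt
          (Finset.prod_le_one (fun _ _ => zero_le) fun i _ => prob_le_one)
          one_lt_top)))
      exact this.congr fun m =>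
        (cylEvent_meas P K hmeas hindep hident n m).symm
    rw [hAn]
    exact tendsto_nhds_unique h1 h2
  -- D₀ ∩ D_n = A n ∩ D_n
  have hDD : regEvent K 0 ∩ regEvent K n = {ω | ∀ i < n, K i ω ≤ i} ∩ regEvent K n := by
    ext ω
    simp only [Set.mem_inter_iff, regEvent, Set.mem_setOf_eq]
    constructor
    · rintro ⟨h1, h2⟩
      exact ⟨fun i _ => by simpa using h1 i, h2⟩
    · rintro ⟨h1, h2⟩
      refine ⟨fun i => ?_, h2⟩
      rcases lt_or_ge i n with hi | hi
      · simpa using h1 i hi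
      · have := h2 (i - n)
        have heq : n + (i - n) = i := by omega
        rw [heq] at this
        rw [Nat.zero_add]
        omega
  have hD0meas : MeasurableSet (regEvent K 0) := by
    have : regEvent K 0 = ⋂ i : ℕ, K (0 + i) ⁻¹' Set.Iic i := by
      ext ω; simp [regEvent]
    rw [this]
    exact MeasurableSet.iInter fun i => (hmeas _) measurableSet_Iic
  have hcond : P[regEvent K n | regEvent K 0] = P {ω | ∀ i < n, K i ω ≤ i} := by
    rw [cond_apply hD0meas, hDD, hmain, mul_comm (P _) (P (regEvent K 0)),
      ← mul_assoc, ENNReal.inv_mul_cancel hpos.ne' (measure_ne_top _ _), one_mul]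
  refine ⟨hcond, ?_⟩
  rw [hcond]
  refine measure_mono fun ω hω i _ => ?_
  simpa using hω i
end

section
/- Suppose E[K₀] < ∞. Let R₀ := 0 and R_i := inf{n > R_{i−1} : X_n = 0} be the successive return times of the walk to the origin, let D_n := {K_{n+i} ≤ i for all i ≥ 0} be the event that n is a regeneration time, and let P̄(·) := P(· | D₀). Then for every i ≥ 1, P̄( for all k ≥ i: R_k < ∞ and D_{R_k} does not occur ) = 0; that is, under P̄ it is almost surely impossible that the walk returns to 0 infinitely often with all but finitely many of these return times failing to be regeneration times. -/
open MeasureTheory ProbabilityTheory Filter ENNReal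
open scoped Classical
set_option linter.unusedSectionVars false
set_option maxHeartbeats 800000

/-- `y` is a nearest neighbor of `x` in `ℤ^d`. -/
def IsNeighbor {d : ℕ} (x y : Fin d → ℤ) : Prop := (∑ i, |x i - y i|) = 1

/-- The `p`-th neighbor of `x` (for `p : Fin d × Bool`): `x ± e_i`. -/
def nbr {d : ℕ} (x : Fin d → ℤ) (p : Fin d × Bool) : Fin d → ℤ :=
  Function.update x p.1 (x p.1 + if p.2 then 1 else -1)

/-- The undirected edge `{a, b}` belongs to the set `R_{n,m}` of the last `m` edges
traversed (by time `n`) by the path `x`. -/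
def InRecentRange {d : ℕ} (x : ℕ → Fin d → ℤ) (n m : ℕ) (a b : Fin d → ℤ) : Prop :=
  ∃ i : ℕ, 1 ≤ i ∧ i ≤ n ∧ n + 1 ≤ i + m ∧ ({x (i - 1), x i} : Set (Fin d → ℤ)) = {a, b}

/-- Indicator (as a real number) of the edge `{a,b}` being in `R_{n,m}`. -/
noncomputable def indR {d : ℕ} (x : ℕ → Fin d → ℤ) (n m : ℕ) (a b : Fin d → ℤ) : ℝ :=
  if InRecentRange x n m a b then 1 else 0

/-- The event that the walk/memory history up to time `n` is given by `(x, k)`;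
these events generate the σ-algebra `F_n = σ(X_i, K_i : i ≤ n)`. -/
def HistEvent {Ω : Type*} {d : ℕ} (X : ℕ → Ω → Fin d → ℤ) (K : ℕ → Ω → ℕ)
    (n : ℕ) (x : ℕ → Fin d → ℤ) (k : ℕ → ℕ) : Set Ω :=
  {ω | (∀ i ≤ n, X i ω = x i) ∧ (∀ i ≤ n, K i ω = k i)}

/-- The random memory walk on `ℤ^d` with reinforcement parameter `δ`, driven by the
i.i.d. memory sequence `(K_n)` with `P(K₀ = 0) > 0`. -/
structure IsRandomMemoryWalk {Ω : Type*} [MeasurableSpace Ω] (d : ℕ) (P : Measure Ω)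
    (δ : ℝ) (X : ℕ → Ω → Fin d → ℤ) (K : ℕ → Ω → ℕ) : Prop where
  isProb : IsProbabilityMeasure P
  hδ : 0 < δ
  measX : ∀ n, Measurable (X n)
  measK : ∀ n, Measurable (K n)
  /-- `(K_n)` is an independent family. -/
  indepK : iIndepFun K P
  /-- `(K_n)` are identically distributed. -/
  identK : ∀ n, P.map (K n) = P.map (K 0)
  /-- `P(K₀ = 0) > 0`. -/
  posK0 : 0 < P {ω | K 0 ω = 0}
  /-- The walk starts at the origin. -/
  init : ∀ ω, X 0 ω = 0
  /-- `K_n` is independent of `σ(X_i : i ≤ n ; K_j : j < n)`. -/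
  memIndep : ∀ n : ℕ, IndepFun (K n)
      (fun ω => (fun i : Fin (n + 1) => X i ω, fun j : Fin n => K j ω)) P
  /-- The jump distribution: conditionally on the history `F_n`, the walk jumps from
  `X_n` to a neighbor `y` with probability proportional to `1 + δ · 1{{X_n,y} ∈ R_{n,K_n}}`. -/
  jump : ∀ (n : ℕ) (x : ℕ → Fin d → ℤ) (k : ℕ → ℕ) (y : Fin d → ℤ),
      IsNeighbor (x n) y → 0 < P (HistEvent X K n x k) →
      P ({ω | X (n + 1) ω = y} ∩ HistEvent X K n x k) / P (HistEvent X K n x k)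
        = ENNReal.ofReal ((1 + δ * indR x n (k n) (x n) y) /
            ∑ p : Fin d × Bool, (1 + δ * indR x n (k n) (x n) (nbr (x n) p)))

open scoped ProbabilityTheory

/-- The regeneration times: `τ₀ := 0` and
`τ_n := inf {m > τ_{n−1} : K_{m+i} ≤ i for all i ≥ 0}` (with `inf ∅ = ∞`). -/
noncomputable def regTime {Ω : Type*} (K : ℕ → Ω → ℕ) : ℕ → Ω → ℕ∞
  | 0, _ => 0
  | (n + 1), ω =>
      sInf {m : ℕ∞ | ∃ j : ℕ, m = (j : ℕ∞) ∧ regTime K n ω < (j : ℕ∞) ∧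
        ∀ i : ℕ, K (j + i) ω ≤ i}

/-- `D₀ := {K_i ≤ i for all i ≥ 0}`, the event that `0` is a regeneration time. -/
def regZero {Ω : Type*} (K : ℕ → Ω → ℕ) : Set Ω := {ω | ∀ i : ℕ, K i ω ≤ i}
/-- The successive return times to the origin: `R₀ := 0` and
`R_i := inf {n > R_{i−1} : X_n = 0}` (with `inf ∅ = ∞`). -/
noncomputable def retTime {Ω : Type*} {d : ℕ} (X : ℕ → Ω → Fin d → ℤ) : ℕ → Ω → ℕ∞
  | 0, _ => 0
  | (i + 1), ω =>
      sInf {m : ℕ∞ | ∃ n : ℕ, m = (n : ℕ∞) ∧ retTime X i ω < (n : ℕ∞) ∧ X n ω = 0}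


section Aux
variable {Ω : Type*} [MeasurableSpace Ω] {d : ℕ}
  (X : ℕ → Ω → Fin d → ℤ) (K : ℕ → Ω → ℕ)

/-- The history map `(X_{≤n}, K_{<n})`. -/
def histMap (n : ℕ) : Ω → (Fin (n+1) → Fin d → ℤ) × (Fin n → ℕ) :=
  fun ω => (fun i => X i ω, fun j => K j ω)

/-- The σ-algebra generated by the history up to time `n`. -/
def histAlg (n : ℕ) : MeasurableSpace Ω :=
  MeasurableSpace.comap (histMap X K n) inferInstance

lemma measurable_histMap (hX : ∀ n, Measurable (X n)) (hK : ∀ n, Measurable (K n)) (n : ℕ) :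
    Measurable (histMap X K n) :=
  Measurable.prod (measurable_pi_lambda _ fun i => hX i)
    (measurable_pi_lambda _ fun j => hK j)

lemma histAlg_mono {n m : ℕ} (h : n ≤ m) : histAlg X K n ≤ histAlg X K m := by
  have hφ : Measurable (fun p : (Fin (m+1) → Fin d → ℤ) × (Fin m → ℕ) =>
      ((fun i : Fin (n+1) => p.1 (Fin.castLE (by omega) i),
        fun j : Fin n => p.2 (Fin.castLE (by omega) j)) :
        (Fin (n+1) → Fin d → ℤ) × (Fin n → ℕ))) := by
    refine Measurable.prod ?_ ?_ <;> dsimp only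
    · exact measurable_pi_lambda _ fun i => measurable_fst.eval
    · exact measurable_pi_lambda _ fun j => measurable_snd.eval
  have hcomp : histMap X K n = (fun p : (Fin (m+1) → Fin d → ℤ) × (Fin m → ℕ) =>
      ((fun i : Fin (n+1) => p.1 (Fin.castLE (by omega) i),
        fun j : Fin n => p.2 (Fin.castLE (by omega) j)) :
        (Fin (n+1) → Fin d → ℤ) × (Fin n → ℕ))) ∘ histMap X K m := by
    funext ω; simp [histMap, Function.comp]
  rw [histAlg, hcomp, ← MeasurableSpace.comap_comp]
  exact MeasurableSpace.comap_mono hφ.comap_le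

lemma histAlg_le (hX : ∀ n, Measurable (X n)) (hK : ∀ n, Measurable (K n)) (n : ℕ) :
    histAlg X K n ≤ ‹MeasurableSpace Ω› :=
  (measurable_histMap X K hX hK n).comap_le

lemma measurableSet_X_event {t n : ℕ} (h : t ≤ n) (A : Set (Fin d → ℤ)) (hA : MeasurableSet A) :
    MeasurableSet[histAlg X K n] (X t ⁻¹' A) := by
  have hm : Measurable (fun p : (Fin (n+1) → Fin d → ℤ) × (Fin n → ℕ) => p.1 ⟨t, by omega⟩) :=
    measurable_fst.eval
  exact ⟨_, hm hA, rfl⟩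

lemma measurableSet_K_event {t n : ℕ} (h : t < n) (A : Set ℕ) :
    MeasurableSet[histAlg X K n] (K t ⁻¹' A) := by
  have hm : Measurable (fun p : (Fin (n+1) → Fin d → ℤ) × (Fin n → ℕ) => p.2 ⟨t, by omega⟩) :=
    measurable_snd.eval
  exact ⟨_, hm (MeasurableSet.of_discrete (s := A)), rfl⟩

end Aux

section Indep
variable {Ω : Type*} [MeasurableSpace Ω] {d : ℕ}
  {P : Measure Ω} {X : ℕ → Ω → Fin d → ℤ} {K : ℕ → Ω → ℕ}
  (hX : ∀ n, Measurable (X n)) (hK : ∀ n, Measurable (K n))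
  (hMI : ∀ n : ℕ, IndepFun (K n)
      (fun ω => (fun i : Fin (n + 1) => X i ω, fun j : Fin n => K j ω)) P)
  [IsProbabilityMeasure P]

include hX hK hMI

/-- One-step independence: a history-measurable event is independent of `K n`. -/
lemma indep_one {n : ℕ} {S : Set Ω} (hS : MeasurableSet[histAlg X K n] S) (A : Set ℕ) :
    P (S ∩ K n ⁻¹' A) = P S * P (K n ⁻¹' A) := by
  obtain ⟨B, hB, rfl⟩ := hS
  have h := (indepFun_iff_measure_inter_preimage_eq_mul.1 (hMI n)) A B
    (MeasurableSet.of_discrete) hB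
  have : histMap X K n = fun ω => (fun i : Fin (n + 1) => X i ω, fun j : Fin n => K j ω) := rfl
  rw [this, Set.inter_comm, h, mul_comm]

/-- Product formula for a block of `K`'s. -/
lemma prodK {n : ℕ} (m : ℕ) (A : ℕ → Set ℕ) :
    P (⋂ j ∈ Finset.range m, K (n + j) ⁻¹' A j)
      = ∏ j ∈ Finset.range m, P (K (n + j) ⁻¹' A j) := by
  induction m with
  | zero => simp
  | succ m ih =>
      have hmem : MeasurableSet[histAlg X K (n + m)] (⋂ j ∈ Finset.range m, K (n + j) ⁻¹' A j) :=
        Finset.measurableSet_biInter _ fun j hj =>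
          measurableSet_K_event X K (by simp at hj; omega) (A j)
      rw [Finset.range_add_one, Finset.set_biInter_insert, Set.inter_comm,
        indep_one hX hK hMI hmem (A m), ih, Finset.prod_insert (by simp), mul_comm]

/-- Block independence: a history-measurable event at time `n` is independent of any
finite collection of events on `K (n+j)`, `j < m`. -/
lemma blockIndep {n : ℕ} {S : Set Ω} (hS : MeasurableSet[histAlg X K n] S) (m : ℕ)
    (A : ℕ → Set ℕ) :
    P (S ∩ ⋂ j ∈ Finset.range m, K (n + j) ⁻¹' A j)
      = P S * P (⋂ j ∈ Finset.range m, K (n + j) ⁻¹' A j) := by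
  induction m with
  | zero => simp
  | succ m ih =>
      have hT : MeasurableSet[histAlg X K (n + m)]
          (⋂ j ∈ Finset.range m, K (n + j) ⁻¹' A j) :=
        Finset.measurableSet_biInter _ fun j hj =>
          measurableSet_K_event X K (by simp at hj; omega) (A j)
      have hmem : MeasurableSet[histAlg X K (n + m)]
          (S ∩ ⋂ j ∈ Finset.range m, K (n + j) ⁻¹' A j) :=
        MeasurableSet.inter (histAlg_mono X K (Nat.le_add_right n m) S hS) hT
      rw [Finset.range_add_one, Finset.set_biInter_insert]
      set T := ⋂ j ∈ Finset.range m, K (n + j) ⁻¹' A j with hTdef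
      have e1 : S ∩ (K (n + m) ⁻¹' A m ∩ T) = (S ∩ T) ∩ K (n + m) ⁻¹' A m := by
        rw [Set.inter_comm (K (n + m) ⁻¹' A m) T, Set.inter_assoc]
      have e2 : K (n + m) ⁻¹' A m ∩ T = T ∩ K (n + m) ⁻¹' A m := Set.inter_comm _ _
      rw [e1, e2, indep_one hX hK hMI hmem (A m), indep_one hX hK hMI hT (A m), ih, mul_assoc]

end Indep
section Ret
variable {Ω : Type*} {d : ℕ} {X : ℕ → Ω → Fin d → ℤ}

example : MeasurableSet ({0} : Set (Fin d → ℤ)) := measurableSet_singleton 0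

lemma retTime_succ_eq_iff {k n : ℕ} {ω : Ω} :
    retTime X (k + 1) ω = (n : ℕ∞) ↔
      ∃ n' : ℕ, retTime X k ω = (n' : ℕ∞) ∧ n' < n ∧ X n ω = 0 ∧
        ∀ t : ℕ, n' < t → t < n → X t ω ≠ 0 := by
  constructor
  · intro h
    rw [retTime] at h
    set S := {m : ℕ∞ | ∃ j : ℕ, m = (j : ℕ∞) ∧ retTime X k ω < (j : ℕ∞) ∧ X j ω = 0} with hS
    have hne : ∃ a ∈ S, a < ⊤ := by
      rw [← sInf_lt_iff, h]; exact ENat.coe_lt_top n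
    obtain ⟨a, haS, -⟩ := hne
    obtain ⟨j₀, rfl, hlt₀, hX₀⟩ := haS
    have hfin : retTime X k ω ≠ ⊤ := (hlt₀.trans (ENat.coe_lt_top j₀)).ne
    set n' := (retTime X k ω).toNat with hn'def
    have hn' : (n' : ℕ∞) = retTime X k ω := ENat.coe_toNat hfin
    have hA : ∃ j : ℕ, n' < j ∧ X j ω = 0 := by
      refine ⟨j₀, ?_, hX₀⟩
      have := hlt₀; rw [← hn'] at this; exact_mod_cast this
    set jm := Nat.find hA with hjm
    have hmem : (jm : ℕ∞) ∈ S := by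
      refine ⟨jm, rfl, ?_, (Nat.find_spec hA).2⟩
      rw [← hn']; exact_mod_cast (Nat.find_spec hA).1
    have hlb : ∀ m ∈ S, (jm : ℕ∞) ≤ m := by
      rintro m ⟨j, rfl, hlt, hXj⟩
      have hj : n' < j := by rw [← hn'] at hlt; exact_mod_cast hlt
      exact_mod_cast Nat.find_min' hA ⟨hj, hXj⟩
    have : sInf S = (jm : ℕ∞) := le_antisymm (sInf_le hmem) (le_sInf hlb)
    rw [this] at h
    have hn : n = jm := by exact_mod_cast h.symm
    refine ⟨n', hn'.symm, ?_, ?_, ?_⟩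
    · rw [hn]; exact (Nat.find_spec hA).1
    · rw [hn]; exact (Nat.find_spec hA).2
    · intro t ht1 ht2 hXt
      rw [hn] at ht2
      exact Nat.find_min hA ht2 ⟨ht1, hXt⟩
  · rintro ⟨n', hret, hlt, hXn, hmid⟩
    rw [retTime]
    refine le_antisymm (sInf_le ⟨n, rfl, by rw [hret]; exact_mod_cast hlt, hXn⟩) (le_sInf ?_)
    rintro m ⟨j, rfl, hltj, hXj⟩
    rw [hret] at hltj
    have hj : n' < j := by exact_mod_cast hltj
    by_contra hc
    push_neg at hc
    have hjn : j < n := by exact_mod_cast hc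
    exact hmid j hj hjn hXj

lemma retTime_gap {k L n : ℕ} {ω : Ω} (h : retTime X (k + L) ω = (n : ℕ∞)) :
    ∃ n' : ℕ, retTime X k ω = (n' : ℕ∞) ∧ n' + L ≤ n := by
  induction L generalizing n with
  | zero => exact ⟨n, h, by omega⟩
  | succ L ih =>
      obtain ⟨n', hret, hlt, -, -⟩ := retTime_succ_eq_iff.1 h
      obtain ⟨n'', hret'', hle⟩ := ih hret
      exact ⟨n'', hret'', by omega⟩

end Ret

section RetMeas
variable {Ω : Type*} [MeasurableSpace Ω] {d : ℕ}
  (X : ℕ → Ω → Fin d → ℤ) (K : ℕ → Ω → ℕ)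

lemma measurableSet_retTime (k n : ℕ) :
    MeasurableSet[histAlg X K n] {ω | retTime X k ω = (n : ℕ∞)} := by
  induction k generalizing n with
  | zero =>
      cases n with
      | zero =>
          have h : {ω : Ω | retTime X 0 ω = ((0:ℕ) : ℕ∞)} = Set.univ := by
            ext ω; simp [retTime]
          rw [h]; exact @MeasurableSet.univ _ (histAlg X K _)
      | succ n =>
          have h : {ω : Ω | retTime X 0 ω = ((n+1 : ℕ) : ℕ∞)} = ∅ := by
            ext ω
            simp only [retTime, Set.mem_setOf_eq, Set.mem_empty_iff_false, iff_false]
            intro h; have : (0:ℕ) = n+1 := by exact_mod_cast h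
            omega
          rw [h]; exact @MeasurableSet.empty _ (histAlg X K _)
  | succ k ih =>
      have heq : {ω : Ω | retTime X (k+1) ω = (n : ℕ∞)} =
          ⋃ n' ∈ Finset.range n, ({ω | retTime X k ω = (n' : ℕ∞)} ∩ X n ⁻¹' {0} ∩
            ⋂ t ∈ Finset.Ioo n' n, (X t ⁻¹' {0})ᶜ) := by
        ext ω
        simp only [Set.mem_setOf_eq, Set.mem_iUnion, Set.mem_inter_iff, Set.mem_iInter,
          Set.mem_preimage, Set.mem_singleton_iff, Set.mem_compl_iff, Finset.mem_range,
          Finset.mem_Ioo, exists_prop]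
        rw [retTime_succ_eq_iff]
        constructor
        · rintro ⟨n', h1, h2, h3, h4⟩
          exact ⟨n', h2, ⟨h1, h3⟩, fun t ht => h4 t ht.1 ht.2⟩
        · rintro ⟨n', h2, ⟨h1, h3⟩, h4⟩
          exact ⟨n', h1, h2, h3, fun t ht1 ht2 => h4 t ⟨ht1, ht2⟩⟩
      rw [heq]
      refine Finset.measurableSet_biUnion _ fun n' hn' => ?_
      simp only [Finset.mem_range] at hn'
      refine MeasurableSet.inter (MeasurableSet.inter ?_ ?_) ?_
      · exact histAlg_mono X K (by omega) _ (ih n')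
      · exact measurableSet_X_event X K le_rfl _ (measurableSet_singleton 0)
      · refine Finset.measurableSet_biInter _ fun t ht => ?_
        simp only [Finset.mem_Ioo] at ht
        exact (measurableSet_X_event X K (by omega) _ (measurableSet_singleton 0)).compl

end RetMeas


section Tail
variable {Ω : Type*} [MeasurableSpace Ω] {P : Measure Ω} {K : ℕ → Ω → ℕ}

lemma tail_sum_lt_top (hKm : Measurable (K 0))
    (hK : Integrable (fun ω => (K 0 ω : ℝ)) P) :
    ∑' j : ℕ, P {ω | j < K 0 ω} ≠ ⊤ := by
  have hmeas : ∀ j : ℕ, MeasurableSet {ω | j < K 0 ω} := by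
    intro j
    exact hKm MeasurableSet.of_discrete
  have hbound : ∀ N : ℕ, ∑ j ∈ Finset.range N, P {ω | j < K 0 ω}
      ≤ ∫⁻ ω, ENNReal.ofReal ((K 0 ω : ℝ)) ∂P := by
    intro N
    have h1 : ∀ j : ℕ, P {ω | j < K 0 ω}
        = ∫⁻ ω, Set.indicator {ω | j < K 0 ω} (1 : Ω → ℝ≥0∞) ω ∂P := by
      intro j; rw [lintegral_indicator_one (hmeas j)]
    calc ∑ j ∈ Finset.range N, P {ω | j < K 0 ω}
        = ∑ j ∈ Finset.range N,
            ∫⁻ ω, Set.indicator {ω | j < K 0 ω} (1 : Ω → ℝ≥0∞) ω ∂P := by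
          exact Finset.sum_congr rfl fun j _ => h1 j
      _ = ∫⁻ ω, ∑ j ∈ Finset.range N,
            Set.indicator {ω | j < K 0 ω} (1 : Ω → ℝ≥0∞) ω ∂P := by
          rw [lintegral_finset_sum]
          intro j _
          exact measurable_one.indicator (hmeas j)
      _ ≤ ∫⁻ ω, ENNReal.ofReal ((K 0 ω : ℝ)) ∂P := by
          refine lintegral_mono fun ω => ?_
          have : ∑ j ∈ Finset.range N,
              Set.indicator {ω' | j < K 0 ω'} (1 : Ω → ℝ≥0∞) ω
              = ((Finset.range N).filter (fun j => j < K 0 ω)).card := by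
            rw [Finset.card_filter]
            push_cast
            refine Finset.sum_congr rfl fun j _ => ?_
            by_cases h : j < K 0 ω <;> simp [Set.indicator, h]
          rw [this, ENNReal.ofReal_natCast]
          have hsub : (Finset.range N).filter (fun j => j < K 0 ω)
              ⊆ Finset.range (K 0 ω) := by
            intro j hj; simp at hj ⊢; omega
          have := Finset.card_le_card hsub
          simpa using (Nat.cast_le (α := ℝ≥0∞)).2 (by simpa using this)
  have hfin : ∫⁻ ω, ENNReal.ofReal ((K 0 ω : ℝ)) ∂P < ⊤ := hK.lintegral_lt_top
  refine ne_top_of_le_ne_top hfin.ne ?_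
  rw [ENNReal.tsum_eq_iSup_sum' (fun N => Finset.range N)
    (fun t => Finset.exists_nat_subset_range t)]
  exact iSup_le hbound

end Tail

section Prod
variable {Ω : Type*} [MeasurableSpace Ω] {P : Measure Ω} {K : ℕ → Ω → ℕ}
  [IsProbabilityMeasure P]

lemma prod_q_lower (hKm : Measurable (K 0)) (htail : ∑' j : ℕ, P {ω | j < K 0 ω} ≠ ⊤)
    (hpos : 0 < P {ω | K 0 ω = 0}) :
    ∃ c : ℝ≥0∞, 0 < c ∧ ∀ L : ℕ, c ≤ ∏ j ∈ Finset.range L, P {ω | K 0 ω ≤ j} := by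
  set p : ℕ → ℝ≥0∞ := fun j => P {ω | j < K 0 ω} with hp
  set q : ℕ → ℝ≥0∞ := fun j => P {ω | K 0 ω ≤ j} with hq
  have hqfin : ∀ j, q j ≠ ⊤ := fun j => (measure_lt_top P _).ne
  have hq1 : ∀ j, q j ≤ 1 := fun j => prob_le_one
  have hqp : ∀ j, q j + p j = 1 := by
    intro j
    have hdisj : Disjoint {ω | K 0 ω ≤ j} {ω | j < K 0 ω} := by
      rw [Set.disjoint_iff]; intro ω ⟨h1, h2⟩; simp at h1 h2; omega
    have hunion : {ω | K 0 ω ≤ j} ∪ {ω | j < K 0 ω} = Set.univ := by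
      ext ω; simp; omega
    rw [← measure_union hdisj (hKm MeasurableSet.of_discrete), hunion, measure_univ]
  have hqpos : ∀ j, 0 < q j := by
    intro j
    refine lt_of_lt_of_le hpos (measure_mono ?_)
    intro ω h; simp at h ⊢; omega
  -- choose J with small tail
  have htend : Tendsto (fun i : ℕ => ∑' k : ℕ, p (k + i)) atTop (nhds 0) :=
    ENNReal.tendsto_sum_nat_add p htail
  obtain ⟨J, hJ⟩ : ∃ J : ℕ, ∑' k : ℕ, p (k + J) ≤ 1/2 := by
    have := (htend.eventually (gt_mem_nhds (by norm_num : (0:ℝ≥0∞) < 1/2))).exists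
    obtain ⟨J, hJ⟩ := this
    exact ⟨J, hJ.le⟩
  -- real versions
  set pr : ℕ → ℝ := fun j => (p j).toReal with hpr
  set qr : ℕ → ℝ := fun j => (q j).toReal with hqr
  have hqr1 : ∀ j, qr j = 1 - pr j := by
    intro j
    have := hqp j
    have hpfin : p j ≠ ⊤ := (measure_lt_top P _).ne
    have : (q j).toReal + (p j).toReal = 1 := by
      rw [← ENNReal.toReal_add (hqfin j) hpfin, this]; simp
    linarith [this]
  have hprbd : ∀ j, 0 ≤ pr j ∧ pr j ≤ 1 := by
    intro j
    constructor
    · exact ENNReal.toReal_nonneg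
    · have : pr j = 1 - qr j := by rw [hqr1 j]; ring
      rw [this]
      have := ENNReal.toReal_nonneg (a := q j)
      linarith
  have hsum_le : ∀ L, J ≤ L → ∑ j ∈ Finset.Ico J L, pr j ≤ 1/2 := by
    intro L hL
    have h1 : ∑ j ∈ Finset.Ico J L, p j ≤ ∑' k : ℕ, p (k + J) := by
      rw [Finset.sum_Ico_eq_sum_range]
      calc ∑ i ∈ Finset.range (L - J), p (J + i)
          ≤ ∑' i : ℕ, p (J + i) := ENNReal.sum_le_tsum _
        _ = ∑' k : ℕ, p (k + J) := by apply tsum_congr; intro k; rw [add_comm]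
    have h2 : ∑ j ∈ Finset.Ico J L, p j ≤ 1/2 := h1.trans hJ
    have h3 : (∑ j ∈ Finset.Ico J L, p j).toReal ≤ ((1:ℝ≥0∞)/2).toReal := by
      refine ENNReal.toReal_mono (by norm_num) h2
    rw [ENNReal.toReal_sum (fun j _ => (measure_lt_top P _).ne)] at h3
    simpa using h3
  -- product lower bound for L ≥ J
  have hind : ∀ L, J ≤ L → (∏ j ∈ Finset.range J, qr j) * (1 - ∑ j ∈ Finset.Ico J L, pr j)
      ≤ ∏ j ∈ Finset.range L, qr j := by
    intro L hL
    induction L with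
    | zero =>
        have : J = 0 := by omega
        subst this; simp
    | succ L ih =>
        rcases Nat.lt_or_ge L J with hLJ | hLJ
        · have hJL : J = L + 1 := by omega
          subst hJL; simp
        · have hih := ih hLJ
          rw [Finset.prod_range_succ]
          have hqrpos : 0 ≤ qr L := ENNReal.toReal_nonneg
          have hIco : Finset.Ico J (L+1) = insert L (Finset.Ico J L) := by
            ext x; simp [Finset.mem_Ico, Finset.mem_insert]; omega
          rw [hIco, Finset.sum_insert (by simp)]
          set PJ := ∏ j ∈ Finset.range J, qr j with hPJ
          have hPJpos : 0 ≤ PJ := Finset.prod_nonneg fun j _ => ENNReal.toReal_nonneg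
          have hPJ1 : PJ ≤ 1 := by
            refine Finset.prod_le_one (fun j _ => ENNReal.toReal_nonneg) ?_
            intro j _
            exact ENNReal.toReal_le_of_le_ofReal (by norm_num) (by simpa using hq1 j)
          have h1 : PJ * (1 - (pr L + ∑ j ∈ Finset.Ico J L, pr j))
              ≤ (PJ * (1 - ∑ j ∈ Finset.Ico J L, pr j)) * (1 - pr L) := by
            have hprL := hprbd L
            have hSnn : 0 ≤ ∑ j ∈ Finset.Ico J L, pr j :=
              Finset.sum_nonneg fun j _ => (hprbd j).1
            nlinarith [mul_nonneg (mul_nonneg hPJpos hSnn) hprL.1]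
          refine h1.trans ?_
          have : 1 - pr L = qr L := (hqr1 L).symm
          rw [this]
          exact mul_le_mul_of_nonneg_right hih hqrpos
  -- conclude
  refine ⟨ENNReal.ofReal ((∏ j ∈ Finset.range J, qr j) * (1/2)), ?_, ?_⟩
  · rw [ENNReal.ofReal_pos]
    have : 0 < ∏ j ∈ Finset.range J, qr j := by
      refine Finset.prod_pos fun j _ => ?_
      exact ENNReal.toReal_pos (hqpos j).ne' (hqfin j)
    positivity
  · intro L
    rcases Nat.lt_or_ge L J with hLJ | hLJ
    · -- L < J : range L prod ≥ range J prod ≥ ofReal bound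
      have h1 : (∏ j ∈ Finset.range J, qr j) * (1/2) ≤ ∏ j ∈ Finset.range L, qr j := by
        have hsplit : ∏ j ∈ Finset.range J, qr j ≤ ∏ j ∈ Finset.range L, qr j := by
          have hJL' : J = L + (J - L) := by omega
          rw [hJL', Finset.prod_range_add]
          have hle1 : ∏ x ∈ Finset.range (J - L), qr (L + x) ≤ 1 := by
            refine Finset.prod_le_one (fun j _ => ENNReal.toReal_nonneg) ?_
            intro j _
            exact ENNReal.toReal_le_of_le_ofReal (by norm_num) (by simpa using hq1 (L + j))
          exact mul_le_of_le_one_right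
            (Finset.prod_nonneg fun j _ => ENNReal.toReal_nonneg) hle1
        have hnn : 0 ≤ ∏ j ∈ Finset.range J, qr j :=
          Finset.prod_nonneg fun j _ => ENNReal.toReal_nonneg
        nlinarith
      calc ENNReal.ofReal ((∏ j ∈ Finset.range J, qr j) * (1/2))
          ≤ ENNReal.ofReal (∏ j ∈ Finset.range L, qr j) := ENNReal.ofReal_le_ofReal h1
        _ = ∏ j ∈ Finset.range L, q j := by
            rw [← ENNReal.toReal_prod, ENNReal.ofReal_toReal]
            exact (ENNReal.prod_lt_top (fun j _ => (hqfin j).lt_top)).ne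
    · have h2 := hind L hLJ
      have h3 : (∏ j ∈ Finset.range J, qr j) * (1/2) ≤ ∏ j ∈ Finset.range L, qr j := by
        have hs := hsum_le L hLJ
        have hnn : 0 ≤ ∏ j ∈ Finset.range J, qr j :=
          Finset.prod_nonneg fun j _ => ENNReal.toReal_nonneg
        nlinarith
      calc ENNReal.ofReal ((∏ j ∈ Finset.range J, qr j) * (1/2))
          ≤ ENNReal.ofReal (∏ j ∈ Finset.range L, qr j) := ENNReal.ofReal_le_ofReal h3
        _ = ∏ j ∈ Finset.range L, q j := by
            rw [← ENNReal.toReal_prod, ENNReal.ofReal_toReal]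
            exact (ENNReal.prod_lt_top (fun j _ => (hqfin j).lt_top)).ne

end Prod
section Main
variable {Ω : Type*} [MeasurableSpace Ω] {d : ℕ}
  (X : ℕ → Ω → Fin d → ℤ) (K : ℕ → Ω → ℕ)

/-- The good events: at each of the selected return times `R_{i+tL}`, the regeneration
fails within the window of length `L`. -/
def Hset (i L : ℕ) : ℕ → ℕ → Set Ω
  | 0, n => {ω | retTime X i ω = (n : ℕ∞)}
  | (t+1), n =>
      ({ω | retTime X (i + (t+1) * L) ω = (n : ℕ∞)} ∩
        ⋃ (n' : ℕ) (_ : n' + L ≤ n), Hset i L t n') ∩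
      (⋂ j ∈ Finset.range L, K (n + j) ⁻¹' Set.Iic j)ᶜ

lemma Hset_subset_ret (i L : ℕ) : ∀ t n, Hset X K i L t n ⊆
    {ω | retTime X (i + t * L) ω = (n : ℕ∞)} := by
  intro t n ω hω
  cases t with
  | zero => simpa [Hset] using hω
  | succ t => exact hω.1.1

lemma Hset_mem (i L : ℕ) : ∀ t n, MeasurableSet[histAlg X K (n + L)] (Hset X K i L t n) := by
  intro t
  induction t with
  | zero =>
      intro n
      exact histAlg_mono X K (by omega) _ (measurableSet_retTime X K i n)
  | succ t ih =>
      intro n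
      refine MeasurableSet.inter (MeasurableSet.inter ?_ ?_) (MeasurableSet.compl ?_)
      · exact histAlg_mono X K (by omega) _ (measurableSet_retTime X K _ n)
      · refine MeasurableSet.iUnion fun n' => MeasurableSet.iUnion fun hn' => ?_
        exact histAlg_mono X K (by omega) _ (ih n')
      · refine Finset.measurableSet_biInter _ fun j hj => ?_
        simp only [Finset.mem_range] at hj
        exact measurableSet_K_event X K (by omega) _

/-- The bad events: at the selected return time, regeneration fails only beyond
the window. -/
def BadSet (i L t : ℕ) : Set Ω :=
  ⋃ (n : ℕ) (j : ℕ), ({ω | retTime X (i + t * L) ω = (n : ℕ∞)} ∩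
    {ω | ¬ K (n + (L + j)) ω ≤ L + j})

end Main

section Bounds
variable {Ω : Type*} [MeasurableSpace Ω] {d : ℕ}
  {P : Measure Ω} {X : ℕ → Ω → Fin d → ℤ} {K : ℕ → Ω → ℕ}
  (hX : ∀ n, Measurable (X n)) (hK : ∀ n, Measurable (K n))
  (hMI : ∀ n : ℕ, IndepFun (K n)
      (fun ω => (fun i : Fin (n + 1) => X i ω, fun j : Fin n => K j ω)) P)
  (hid : ∀ n, P.map (K n) = P.map (K 0))
  [IsProbabilityMeasure P]

include hX hK hMI hid

lemma identApply (n : ℕ) (A : Set ℕ) : P (K n ⁻¹' A) = P (K 0 ⁻¹' A) := by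
  rw [← Measure.map_apply (hK n) MeasurableSet.of_discrete, hid n,
    Measure.map_apply (hK 0) MeasurableSet.of_discrete]

lemma Dloc_prob (n L : ℕ) :
    P (⋂ j ∈ Finset.range L, K (n + j) ⁻¹' Set.Iic j)
      = ∏ j ∈ Finset.range L, P {ω | K 0 ω ≤ j} := by
  rw [prodK hX hK hMI L (fun j => Set.Iic j)]
  refine Finset.prod_congr rfl fun j _ => ?_
  rw [identApply hX hK hMI hid (n + j) (Set.Iic j)]
  rfl

lemma Hset_bound (i L : ℕ) (t : ℕ) :
    P (⋃ n : ℕ, Hset X K i L t n)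
      ≤ (1 - ∏ j ∈ Finset.range L, P {ω | K 0 ω ≤ j}) ^ t := by
  set cL := ∏ j ∈ Finset.range L, P {ω | K 0 ω ≤ j} with hcL
  have hcL1 : cL ≤ 1 := by
    rw [hcL, ← Finset.prod_const_one (s := Finset.range L)]
    exact Finset.prod_le_prod' fun j _ => prob_le_one
  induction t with
  | zero => simpa using prob_le_one
  | succ t ih =>
      set J : ℕ → Set Ω := fun n =>
        {ω | retTime X (i + (t+1) * L) ω = (n : ℕ∞)} ∩
          ⋃ (n' : ℕ) (_ : n' + L ≤ n), Hset X K i L t n' with hJ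
      have hJmemA : ∀ n, MeasurableSet[histAlg X K n] (J n) := by
        intro n
        refine MeasurableSet.inter (measurableSet_retTime X K _ n) ?_
        refine MeasurableSet.iUnion fun n' => MeasurableSet.iUnion fun hn' => ?_
        exact histAlg_mono X K (by omega) _ (Hset_mem X K i L t n')
      have hJmeas : ∀ n, MeasurableSet (J n) :=
        fun n => histAlg_le X K hX hK n _ (hJmemA n)
      have hDmeas : ∀ n, MeasurableSet (⋂ j ∈ Finset.range L, K (n + j) ⁻¹' Set.Iic j) :=
        fun n => Finset.measurableSet_biInter _ fun j _ => hK _ MeasurableSet.of_discrete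
      have hsplit : ∀ n, P (Hset X K i L (t+1) n) = P (J n) * (1 - cL) := by
        intro n
        have he : Hset X K i L (t+1) n
            = J n \ (⋂ j ∈ Finset.range L, K (n + j) ⁻¹' Set.Iic j) := rfl
        have hint : P (J n ∩ ⋂ j ∈ Finset.range L, K (n + j) ⁻¹' Set.Iic j)
            = P (J n) * cL := by
          rw [blockIndep hX hK hMI (hJmemA n) L (fun j => Set.Iic j),
            Dloc_prob hX hK hMI hid n L]
        have hd : P (J n \ (⋂ j ∈ Finset.range L, K (n + j) ⁻¹' Set.Iic j))
            = P (J n) - P (J n ∩ ⋂ j ∈ Finset.range L, K (n + j) ⁻¹' Set.Iic j) := by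
          rw [← measure_diff (Set.inter_subset_left)
            ((hJmeas n).inter (hDmeas n)).nullMeasurableSet (measure_lt_top P _).ne]
          congr 1
          ext ω; simp only [Set.mem_diff, Set.mem_inter_iff]; tauto
        rw [he, hd, hint]
        rw [ENNReal.mul_sub (fun _ _ => (measure_lt_top P _).ne), mul_one]
      have hdisj : Pairwise (Function.onFun Disjoint (fun n : ℕ => J n)) := by
        intro a b hab
        simp only [Function.onFun, Set.disjoint_left]
        intro ω ha hb
        have h1 : retTime X (i + (t+1) * L) ω = (a : ℕ∞) := ha.1
        have h2 : retTime X (i + (t+1) * L) ω = (b : ℕ∞) := hb.1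
        rw [h1] at h2
        exact hab (by exact_mod_cast h2)
      calc P (⋃ n : ℕ, Hset X K i L (t+1) n)
          ≤ ∑' n : ℕ, P (Hset X K i L (t+1) n) := measure_iUnion_le _
        _ = ∑' n : ℕ, P (J n) * (1 - cL) := by
            exact tsum_congr fun n => hsplit n
        _ = (∑' n : ℕ, P (J n)) * (1 - cL) := ENNReal.tsum_mul_right
        _ = P (⋃ n : ℕ, J n) * (1 - cL) := by rw [measure_iUnion hdisj hJmeas]
        _ ≤ P (⋃ n' : ℕ, Hset X K i L t n') * (1 - cL) := by
            refine mul_le_mul_left (measure_mono ?_) _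
            refine Set.iUnion_subset fun n => ?_
            refine Set.inter_subset_right.trans ?_
            exact Set.iUnion_subset fun n' => Set.iUnion_subset fun _ =>
              Set.subset_iUnion _ n'
        _ ≤ (1 - cL) ^ t * (1 - cL) := mul_le_mul_left ih _
        _ = (1 - cL) ^ (t+1) := by rw [pow_succ]

lemma BadSet_bound (i L t : ℕ) :
    P (BadSet X K i L t) ≤ ∑' j : ℕ, P {ω | L + j < K 0 ω} := by
  have hR : ∀ n : ℕ, MeasurableSet[histAlg X K n] {ω | retTime X (i + t * L) ω = (n : ℕ∞)} :=
    fun n => measurableSet_retTime X K _ n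
  have hterm : ∀ n j : ℕ, P ({ω | retTime X (i + t * L) ω = (n : ℕ∞)} ∩
      {ω | ¬ K (n + (L + j)) ω ≤ L + j})
      = P {ω | retTime X (i + t * L) ω = (n : ℕ∞)} * P {ω | L + j < K 0 ω} := by
    intro n j
    have h1 : {ω : Ω | ¬ K (n + (L + j)) ω ≤ L + j}
        = K (n + (L + j)) ⁻¹' {x | L + j < x} := by
      ext ω; simp [not_le]
    rw [h1, indep_one hX hK hMI (histAlg_mono X K (by omega) _ (hR n)) _,
      identApply hX hK hMI hid]
    rfl
  calc P (BadSet X K i L t)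
      ≤ ∑' n : ℕ, P (⋃ j : ℕ, ({ω | retTime X (i + t * L) ω = (n : ℕ∞)} ∩
          {ω | ¬ K (n + (L + j)) ω ≤ L + j})) := measure_iUnion_le _
    _ ≤ ∑' n : ℕ, ∑' j : ℕ, P ({ω | retTime X (i + t * L) ω = (n : ℕ∞)} ∩
          {ω | ¬ K (n + (L + j)) ω ≤ L + j}) := by
        exact ENNReal.tsum_le_tsum fun n => measure_iUnion_le _
    _ = ∑' n : ℕ, P {ω | retTime X (i + t * L) ω = (n : ℕ∞)}
          * ∑' j : ℕ, P {ω | L + j < K 0 ω} := by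
        refine tsum_congr fun n => ?_
        rw [← ENNReal.tsum_mul_left]
        exact tsum_congr fun j => hterm n j
    _ = (∑' n : ℕ, P {ω | retTime X (i + t * L) ω = (n : ℕ∞)})
          * ∑' j : ℕ, P {ω | L + j < K 0 ω} := ENNReal.tsum_mul_right
    _ ≤ 1 * ∑' j : ℕ, P {ω | L + j < K 0 ω} := by
        refine mul_le_mul_left ?_ _
        have hdisj : Pairwise (Function.onFun Disjoint
            (fun n : ℕ => {ω : Ω | retTime X (i + t * L) ω = (n : ℕ∞)})) := by
          intro a b hab
          simp only [Function.onFun, Set.disjoint_left]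
          intro ω ha hb
          simp only [Set.mem_setOf_eq] at ha hb
          rw [ha] at hb
          exact hab (by exact_mod_cast hb)
        rw [← measure_iUnion hdisj (fun n => histAlg_le X K hX hK n _ (hR n))]
        exact prob_le_one
    _ = ∑' j : ℕ, P {ω | L + j < K 0 ω} := one_mul _

end Bounds

section Cover
variable {Ω : Type*} [MeasurableSpace Ω] {d : ℕ}
  (X : ℕ → Ω → Fin d → ℤ) (K : ℕ → Ω → ℕ)

lemma cover (i L T : ℕ) :
    {ω | ∀ k : ℕ, i ≤ k → retTime X k ω < ⊤ ∧
        ¬ (∀ j : ℕ, K (ENat.toNat (retTime X k ω) + j) ω ≤ j)}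
      ⊆ (⋃ n : ℕ, Hset X K i L T n) ∪ ⋃ t ∈ Finset.Icc 1 T, BadSet X K i L t := by
  intro ω hω
  simp only [Set.mem_setOf_eq] at hω
  by_cases hloc : ∀ t, 1 ≤ t → t ≤ T →
      ∃ j, j < L ∧ ¬ K (ENat.toNat (retTime X (i + t * L) ω) + j) ω ≤ j
  · left
    have key : ∀ t, t ≤ T → ∃ n : ℕ, retTime X (i + t * L) ω = (n : ℕ∞) ∧
        ω ∈ Hset X K i L t n := by
      intro t
      induction t with
      | zero =>
          intro _
          have h0 := (hω i le_rfl).1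
          refine ⟨ENat.toNat (retTime X i ω), ?_, ?_⟩
          · have : i + 0 * L = i := by ring
            rw [this]
            exact (ENat.coe_toNat h0.ne).symm
          · show retTime X i ω = _
            exact (ENat.coe_toNat h0.ne).symm
      | succ t ih =>
          intro htT
          obtain ⟨n', hret', hmem'⟩ := ih (by omega)
          have hfin := (hω (i + (t+1) * L) (Nat.le_add_right _ _)).1
          set n := ENat.toNat (retTime X (i + (t+1) * L) ω) with hn
          have hret : retTime X (i + (t+1) * L) ω = (n : ℕ∞) :=
            (ENat.coe_toNat hfin.ne).symm
          have hgap : n' + L ≤ n := by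
            have hidx : i + (t+1) * L = (i + t * L) + L := by ring
            rw [hidx] at hret
            obtain ⟨m, hm, hmle⟩ := retTime_gap hret
            rw [hret'] at hm
            have : n' = m := by exact_mod_cast hm
            omega
          obtain ⟨j, hjL, hjbad⟩ := hloc (t+1) (by omega) htT
          rw [← hn] at hjbad
          refine ⟨n, hret, ?_, ?_⟩
          · exact ⟨hret, Set.mem_iUnion.2 ⟨n', Set.mem_iUnion.2 ⟨hgap, hmem'⟩⟩⟩
          · simp only [Set.mem_compl_iff, Set.mem_iInter, Set.mem_preimage,
              Set.mem_Iic, Finset.mem_range, not_forall]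
            exact ⟨j, hjL, hjbad⟩
    obtain ⟨n, -, hmem⟩ := key T le_rfl
    exact Set.mem_iUnion.2 ⟨n, hmem⟩
  · right
    push_neg at hloc
    obtain ⟨t, ht1, htT, hgood⟩ := hloc
    have hfin := (hω (i + t * L) (Nat.le_add_right _ _)).1
    have hbad := (hω (i + t * L) (Nat.le_add_right _ _)).2
    set n := ENat.toNat (retTime X (i + t * L) ω) with hn
    have hret : retTime X (i + t * L) ω = (n : ℕ∞) := (ENat.coe_toNat hfin.ne).symm
    push_neg at hbad
    obtain ⟨j, hj⟩ := hbad
    have hjL : L ≤ j := by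
      by_contra hc
      exact absurd (hgood j (by omega)) (not_le.2 hj)
    refine Set.mem_biUnion (Finset.mem_Icc.2 ⟨ht1, htT⟩) ?_
    refine Set.mem_iUnion.2 ⟨n, Set.mem_iUnion.2 ⟨j - L, ?_, ?_⟩⟩
    · exact hret
    · show ¬ K (n + (L + (j - L))) ω ≤ L + (j - L)
      have : L + (j - L) = j := by omega
      rw [this]
      exact not_le.2 hj

end Cover


/-- If `E[K₀] < ∞`, then for every `i ≥ 1`, under `P̄ := P(· | D₀)` it is
almost surely impossible that for all `k ≥ i` the return time `R_k` is finite and fails to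
be a regeneration time, i.e.
`P̄(∀ k ≥ i : R_k < ∞ and D_{R_k} does not occur) = 0`. -/
theorem returns_eventually_regenerate {Ω : Type*} [MeasurableSpace Ω] {d : ℕ} (hd : 1 ≤ d)
    (P : Measure Ω) (δ : ℝ) (X : ℕ → Ω → Fin d → ℤ) (K : ℕ → Ω → ℕ)
    (hW : IsRandomMemoryWalk d P δ X K)
    (hK : Integrable (fun ω => (K 0 ω : ℝ)) P) :
    ∀ i : ℕ, 1 ≤ i →
      P[|regZero K] {ω | ∀ k : ℕ, i ≤ k →
          retTime X k ω < ⊤ ∧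
            ¬ (∀ j : ℕ, K (ENat.toNat (retTime X k ω) + j) ω ≤ j)} = 0 := by

  intro i hi
  haveI := hW.isProb
  have hX := hW.measX
  have hKm := hW.measK
  have hMI := hW.memIndep
  have hid := hW.identK
  set E := {ω | ∀ k : ℕ, i ≤ k →
      retTime X k ω < ⊤ ∧
        ¬ (∀ j : ℕ, K (ENat.toNat (retTime X k ω) + j) ω ≤ j)} with hE
  have htail : ∑' j : ℕ, P {ω | j < K 0 ω} ≠ ⊤ := tail_sum_lt_top (hKm 0) hK
  obtain ⟨c, hc0, hcle⟩ := prod_q_lower (hKm 0) htail hW.posK0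
  have hmain : ∀ T L : ℕ, P E ≤ (1 - c) ^ T + T * ∑' j : ℕ, P {ω | L + j < K 0 ω} := by
    intro T L
    calc P E ≤ P ((⋃ n : ℕ, Hset X K i L T n) ∪ ⋃ t ∈ Finset.Icc 1 T, BadSet X K i L t) :=
          measure_mono (cover X K i L T)
      _ ≤ P (⋃ n : ℕ, Hset X K i L T n) + P (⋃ t ∈ Finset.Icc 1 T, BadSet X K i L t) :=
          measure_union_le _ _
      _ ≤ (1 - ∏ j ∈ Finset.range L, P {ω | K 0 ω ≤ j}) ^ T
            + ∑ t ∈ Finset.Icc 1 T, P (BadSet X K i L t) := by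
          refine add_le_add (Hset_bound hX hKm hMI hid i L T) ?_
          exact measure_biUnion_finset_le _ _
      _ ≤ (1 - c) ^ T + T * ∑' j : ℕ, P {ω | L + j < K 0 ω} := by
          refine add_le_add ?_ ?_
          · exact pow_le_pow_left' (tsub_le_tsub_left (hcle L) 1) T
          · calc ∑ t ∈ Finset.Icc 1 T, P (BadSet X K i L t)
                ≤ (Finset.Icc 1 T).card • (∑' j : ℕ, P {ω | L + j < K 0 ω}) :=
                  Finset.sum_le_card_nsmul _ _ _ fun t _ => BadSet_bound hX hKm hMI hid i L t
              _ = T * ∑' j : ℕ, P {ω | L + j < K 0 ω} := by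
                  rw [Nat.card_Icc]
                  simp [nsmul_eq_mul]
  have hPE : P E = 0 := by
    have hT : ∀ T : ℕ, P E ≤ (1 - c) ^ T := by
      intro T
      have hsame : ∀ L : ℕ, ∑' j : ℕ, P {ω | L + j < K 0 ω}
          = ∑' k : ℕ, P {ω | k + L < K 0 ω} := by
        intro L
        refine tsum_congr fun j => ?_
        rw [Nat.add_comm]
      have h0 : Tendsto (fun L : ℕ => ∑' j : ℕ, P {ω | L + j < K 0 ω}) atTop (nhds 0) := by
        simp only [hsame]
        exact ENNReal.tendsto_sum_nat_add (fun j => P {ω | j < K 0 ω}) htail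
      have hmul : Tendsto (fun L : ℕ => (T : ℝ≥0∞) * ∑' j : ℕ, P {ω | L + j < K 0 ω})
          atTop (nhds 0) := by
        have := ENNReal.Tendsto.const_mul h0 (Or.inr (ENNReal.natCast_ne_top T))
        simpa using this
      have htend : Tendsto (fun L : ℕ => (1 - c) ^ T + T * ∑' j : ℕ, P {ω | L + j < K 0 ω})
          atTop (nhds ((1 - c) ^ T)) := by
        have := Tendsto.add (tendsto_const_nhds
          (x := ((1 - c) ^ T : ℝ≥0∞)) (f := atTop (α := ℕ))) hmul
        simpa using this
      exact ge_of_tendsto' htend fun L => hmain T L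
    have hlt1 : (1 : ℝ≥0∞) - c < 1 :=
      ENNReal.sub_lt_self one_ne_top one_ne_zero hc0.ne'
    have hlim : Tendsto (fun T : ℕ => ((1 : ℝ≥0∞) - c) ^ T) atTop (nhds 0) :=
      ENNReal.tendsto_pow_atTop_nhds_zero_of_lt_one hlt1
    exact le_antisymm (ge_of_tendsto' hlim hT) zero_le
  have hmeasD : MeasurableSet (regZero K) := by
    have hrz : regZero K = ⋂ m : ℕ, {ω | K m ω ≤ m} := by
      ext ω; simp [regZero]
    rw [hrz]
    exact MeasurableSet.iInter fun m => hKm m (MeasurableSet.of_discrete (s := {x : ℕ | x ≤ m}))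
  rw [ProbabilityTheory.cond_apply hmeasD]
  have hz : P (regZero K ∩ E) = 0 :=
    le_antisymm ((measure_mono Set.inter_subset_right).trans hPE.le) zero_le
  rw [hz, mul_zero]
end
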